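/- arXiv:2407.15530 — 5 statements merged into one kernel-verified Lean document; each statement's English description precedes it below -/
import Mathlib

section
/- Under the stated assumptions, the self-ambiguity and cross-ambiguity parts are uncorrelated: E[χ_s(τ,ν) · conj(χ_c(τ,ν))] = 0. -/
open MeasureTheory ProbabilityTheory Complex

section Aux

variable {Ω : Type*} [MeasureSpace Ω] [IsProbabilityMeasure (ℙ : Measure Ω)]

/-- Complex version of `IndepFun.integral_mul`, via pushforward to product measure. -/
lemma indepFun_integral_mul_complex {X Y : Ω → ℂ} (h : IndepFun X Y ℙ)
    (hX : AEMeasurable X ℙ) (hY : AEMeasurable Y ℙ) :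
    ∫ ω, X ω * Y ω ∂ℙ = (∫ ω, X ω ∂ℙ) * ∫ ω, Y ω ∂ℙ := by
  have hmap := (indepFun_iff_map_prod_eq_prod_map_map hX hY).mp h
  haveI : IsProbabilityMeasure ((ℙ : Measure Ω).map X) := Measure.isProbabilityMeasure_map hX
  haveI : IsProbabilityMeasure ((ℙ : Measure Ω).map Y) := Measure.isProbabilityMeasure_map hY
  have h1 : ∫ ω, X ω * Y ω ∂ℙ
      = ∫ p : ℂ × ℂ, p.1 * p.2 ∂((ℙ : Measure Ω).map (fun ω => (X ω, Y ω))) := by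
    rw [integral_map (f := fun p : ℂ × ℂ => p.1 * p.2) (hX.prodMk hY)
      ((measurable_fst.mul measurable_snd).aestronglyMeasurable)]
  have h2 : ∫ ω, X ω ∂ℙ = ∫ x, x ∂((ℙ : Measure Ω).map X) :=
    (integral_map hX aestronglyMeasurable_id).symm
  have h3 : ∫ ω, Y ω ∂ℙ = ∫ x, x ∂((ℙ : Measure Ω).map Y) :=
    (integral_map hY aestronglyMeasurable_id).symm
  rw [h1, hmap, h2, h3]
  exact integral_prod_mul (fun x => x) (fun y => y)

lemma key_term {L : ℕ} (s : Fin L → Ω → ℂ)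
    (hmeas : ∀ n : Fin L, Measurable (s n))
    (hindep : iIndepFun s ℙ)
    (hmean : ∀ n : Fin L, ∫ ω, s n ω ∂ℙ = 0)
    (hmom3 : ∀ n : Fin L, Integrable (fun ω => ‖s n ω‖ ^ 3) ℙ)
    (k n m : Fin L) (hnm : n ≠ m) :
    Integrable (fun ω => ((‖s k ω‖ : ℂ))^2 * (starRingEnd ℂ) (s n ω) * s m ω) ℙ ∧
    ∫ ω, ((‖s k ω‖ : ℂ))^2 * (starRingEnd ℂ) (s n ω) * s m ω ∂ℙ = 0 := by
  -- measurability helpers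
  have mabs : Measurable fun x : ℂ => ((‖x‖ : ℂ)) :=
    Complex.continuous_ofReal.measurable.comp continuous_norm.measurable
  have mF : Measurable fun x : ℂ => ((‖x‖ : ℂ))^2 := mabs.pow_const 2
  have mconj : Measurable fun x : ℂ => (starRingEnd ℂ) x := Complex.continuous_conj.measurable
  have mFj : ∀ j : Fin L, Measurable fun ω => ((‖s j ω‖ : ℂ))^2 :=
    fun j => mF.comp (hmeas j)
  have mCj : ∀ j : Fin L, Measurable fun ω => (starRingEnd ℂ) (s j ω) :=
    fun j => mconj.comp (hmeas j)
  have hnorm : ∀ (z : ℂ), ‖((‖z‖ : ℂ))^2‖ = (‖z‖)^2 := fun z => by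
    rw [← Complex.ofReal_pow]
    simp [_root_.abs_of_nonneg (sq_nonneg ‖z‖)]
  have hb : ∀ x : ℝ, 0 ≤ x → x ≤ 1 + x ^ 3 ∧ x ^ 2 ≤ 1 + x ^ 3 := by
    intro x hx
    constructor <;> nlinarith [mul_nonneg hx (sq_nonneg (x - 1)), sq_nonneg (x - 1)]
  have I1 : ∀ j : Fin L, Integrable (s j) ℙ := by
    intro j
    refine Integrable.mono' ((integrable_const (1 : ℝ)).add (hmom3 j))
      (hmeas j).aestronglyMeasurable (ae_of_all _ fun ω => ?_)
    simpa using (hb _ (norm_nonneg (s j ω))).1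
  have I2 : ∀ j : Fin L, Integrable (fun ω => ((‖s j ω‖ : ℂ))^2) ℙ := by
    intro j
    refine Integrable.mono' ((integrable_const (1 : ℝ)).add (hmom3 j))
      (mFj j).aestronglyMeasurable (ae_of_all _ fun ω => ?_)
    rw [hnorm]
    exact (hb _ (norm_nonneg (s j ω))).2
  have I3c : ∀ j : Fin L, Integrable (fun ω => ((‖s j ω‖ : ℂ))^2
      * (starRingEnd ℂ) (s j ω)) ℙ := by
    intro j
    refine Integrable.mono' (hmom3 j) ((mFj j).mul (mCj j)).aestronglyMeasurable
      (ae_of_all _ fun ω => le_of_eq ?_)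
    rw [norm_mul, hnorm]
    simp
    ring
  have I3c' : ∀ j : Fin L, Integrable (fun ω => ((‖s j ω‖ : ℂ))^2 * s j ω) ℙ := by
    intro j
    refine Integrable.mono' (hmom3 j) ((mFj j).mul (hmeas j)).aestronglyMeasurable
      (ae_of_all _ fun ω => le_of_eq ?_)
    rw [norm_mul, hnorm]
    ring
  have Iconj : ∀ j : Fin L, Integrable (fun ω => (starRingEnd ℂ) (s j ω)) ℙ := by
    intro j
    refine Integrable.mono' (I1 j).norm (mCj j).aestronglyMeasurable
      (ae_of_all _ fun ω => le_of_eq ?_)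
    simp
  by_cases hkn : k = n
  · subst hkn
    have hXY : IndepFun (fun ω => ((‖s k ω‖ : ℂ))^2 * (starRingEnd ℂ) (s k ω))
        (s m) ℙ :=
      (hindep.indepFun hnm).comp (mF.mul mconj) measurable_id
    have hint : Integrable (fun ω => (((‖s k ω‖ : ℂ))^2 * (starRingEnd ℂ) (s k ω))
        * s m ω) ℙ := hXY.integrable_mul (I3c k) (I1 m)
    refine ⟨hint, ?_⟩
    rw [indepFun_integral_mul_complex hXY ((mFj k).mul (mCj k)).aemeasurable
      (hmeas m).aemeasurable, hmean m, mul_zero]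
  · by_cases hkm : k = m
    · subst hkm
      have heq : (fun ω => ((‖s k ω‖ : ℂ))^2 * (starRingEnd ℂ) (s n ω) * s k ω)
          = fun ω => (starRingEnd ℂ) (s n ω) * (((‖s k ω‖ : ℂ))^2 * s k ω) := by
        funext ω; ring
      have hXY : IndepFun (fun ω => (starRingEnd ℂ) (s n ω))
          (fun ω => ((‖s k ω‖ : ℂ))^2 * s k ω) ℙ :=
        (hindep.indepFun hnm).comp mconj (mF.mul measurable_id)
      rw [heq]
      refine ⟨hXY.integrable_mul (Iconj n) (I3c' k), ?_⟩
      rw [indepFun_integral_mul_complex hXY (mCj n).aemeasurable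
        ((mFj k).mul (hmeas k)).aemeasurable]
      have hzero : ∫ ω, (starRingEnd ℂ) (s n ω) ∂ℙ = 0 := by
        rw [integral_conj, hmean n, map_zero]
      rw [hzero, zero_mul]
    · have heq : (fun ω => ((‖s k ω‖ : ℂ))^2 * (starRingEnd ℂ) (s n ω) * s m ω)
          = fun ω => (((‖s k ω‖ : ℂ))^2 * (starRingEnd ℂ) (s n ω)) * s m ω := by
        funext ω; ring
      have hXY : IndepFun (fun ω => ((‖s k ω‖ : ℂ))^2 * (starRingEnd ℂ) (s n ω))
          (s m) ℙ :=
        (hindep.indepFun_prodMk hmeas k n m hkm hnm).comp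
          ((mF.comp measurable_fst).mul (mconj.comp measurable_snd)) measurable_id
      have hX : Integrable (fun ω => ((‖s k ω‖ : ℂ))^2
          * (starRingEnd ℂ) (s n ω)) ℙ :=
        ((hindep.indepFun hkn).comp mF mconj).integrable_mul (I2 k) (Iconj n)
      rw [heq]
      refine ⟨hXY.integrable_mul hX (I1 m), ?_⟩
      rw [indepFun_integral_mul_complex hXY ((mFj k).mul (mCj n)).aemeasurable
        (hmeas m).aemeasurable, hmean m, mul_zero]

end Aux

/-- The cross-ambiguity function between the `n`-th and `m`-th time-shifted pulses:
`ψ_{n,m}(τ,ν) = exp(−2πi·n·ν·T) · ψ(τ + (m−n)·T, ν)`. -/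
noncomputable def psiNM (ψ : ℝ × ℝ → ℂ) (T τ ν : ℝ) (n m : ℕ) : ℂ :=
  Complex.exp (-2 * Real.pi * Complex.I * n * ν * T) * ψ (τ + ((m : ℝ) - n) * T, ν)

/-- The self-ambiguity part `χ_s(τ,ν) = Σ_n |s_n|² ψ_{n,n}(τ,ν)`. -/
noncomputable def chiS {Ω : Type*} (L : ℕ) (ψ : ℝ × ℝ → ℂ) (T τ ν : ℝ)
    (s : Fin L → Ω → ℂ) (ω : Ω) : ℂ :=
  ∑ n : Fin L, (Complex.ofReal ‖s n ω‖) ^ 2 * psiNM ψ T τ ν n n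

/-- The cross-ambiguity part `χ_c(τ,ν) = Σ_n Σ_{m ≠ n} s_n conj(s_m) ψ_{n,m}(τ,ν)`. -/
noncomputable def chiC {Ω : Type*} (L : ℕ) (ψ : ℝ × ℝ → ℂ) (T τ ν : ℝ)
    (s : Fin L → Ω → ℂ) (ω : Ω) : ℂ :=
  ∑ n : Fin L, ∑ m ∈ Finset.univ.erase n,
    s n ω * (starRingEnd ℂ) (s m ω) * psiNM ψ T τ ν n m

/-- The self-ambiguity and cross-ambiguity parts are uncorrelated:
`E[χ_s(τ,ν) · conj(χ_c(τ,ν))] = 0`. -/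
theorem self_cross_ambiguity_uncorrelated
    {Ω : Type*} [MeasureSpace Ω] [IsProbabilityMeasure (ℙ : Measure Ω)]
    (L : ℕ) (hL : 1 ≤ L) (T : ℝ) (hT : 0 < T) (τ ν : ℝ)
    (ψ : ℝ × ℝ → ℂ) (s : Fin L → Ω → ℂ)
    (hmeas : ∀ n : Fin L, Measurable (s n))
    (hindep : iIndepFun s ℙ)
    (hmean : ∀ n : Fin L, ∫ ω, s n ω ∂ℙ = 0)
    (hmom3 : ∀ n : Fin L, Integrable (fun ω => ‖s n ω‖ ^ 3) ℙ) :
    (∫ ω, chiS L ψ T τ ν s ω * (starRingEnd ℂ) (chiC L ψ T τ ν s ω) ∂ℙ) = 0 := by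
  have hrw : (fun ω => chiS L ψ T τ ν s ω * (starRingEnd ℂ) (chiC L ψ T τ ν s ω))
      = fun ω => ∑ k : Fin L, ∑ n : Fin L, ∑ m ∈ Finset.univ.erase n,
          (psiNM ψ T τ ν k k * (starRingEnd ℂ) (psiNM ψ T τ ν n m)) *
          (((‖s k ω‖ : ℂ))^2 * (starRingEnd ℂ) (s n ω) * s m ω) := by
    funext ω
    unfold chiS chiC
    rw [map_sum, Finset.sum_mul]
    refine Finset.sum_congr rfl fun k _ => ?_
    rw [Finset.mul_sum]
    refine Finset.sum_congr rfl fun n _ => ?_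
    rw [map_sum, Finset.mul_sum]
    refine Finset.sum_congr rfl fun m _ => ?_
    simp only [map_mul, Complex.conj_conj]
    ring
  have hint : ∀ (k n : Fin L) (m : Fin L), m ∈ Finset.univ.erase n →
      Integrable (fun ω => (psiNM ψ T τ ν k k * (starRingEnd ℂ) (psiNM ψ T τ ν n m)) *
        (((‖s k ω‖ : ℂ))^2 * (starRingEnd ℂ) (s n ω) * s m ω)) ℙ := by
    intro k n m hm
    exact ((key_term s hmeas hindep hmean hmom3 k n m
      (Finset.ne_of_mem_erase hm).symm).1).const_mul _
  calc ∫ ω, chiS L ψ T τ ν s ω * (starRingEnd ℂ) (chiC L ψ T τ ν s ω) ∂ℙ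
      = ∑ k : Fin L, ∑ n : Fin L, ∑ m ∈ Finset.univ.erase n,
          ∫ ω, (psiNM ψ T τ ν k k * (starRingEnd ℂ) (psiNM ψ T τ ν n m)) *
            (((‖s k ω‖ : ℂ))^2 * (starRingEnd ℂ) (s n ω) * s m ω) ∂ℙ := by
        rw [show (∫ ω, chiS L ψ T τ ν s ω * (starRingEnd ℂ) (chiC L ψ T τ ν s ω) ∂ℙ)
          = ∫ ω, (fun ω => chiS L ψ T τ ν s ω * (starRingEnd ℂ) (chiC L ψ T τ ν s ω)) ω ∂ℙ
          from rfl, hrw]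
        rw [integral_finset_sum _ (fun k _ => integrable_finset_sum _ (fun n _ =>
          integrable_finset_sum _ (fun m hm => hint k n m hm)))]
        refine Finset.sum_congr rfl fun k _ => ?_
        rw [integral_finset_sum _ (fun n _ => integrable_finset_sum _
          (fun m hm => hint k n m hm))]
        refine Finset.sum_congr rfl fun n _ => ?_
        rw [integral_finset_sum _ (fun m hm => hint k n m hm)]
    _ = 0 := by
        refine Finset.sum_eq_zero fun k _ => Finset.sum_eq_zero fun n _ =>
          Finset.sum_eq_zero fun m hm => ?_
        rw [integral_const_mul, (key_term s hmeas hindep hmean hmom3 k n m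
          (Finset.ne_of_mem_erase hm).symm).2, mul_zero]
end

section
/- Under the stated assumptions, the variance of the cross-ambiguity part satisfies Var(χ_c(τ,ν)) = Σ_{n=1}^{L−1} (L − n)·(|ψ(τ − nT, ν)|² + |ψ(τ + nT, ν)|²), i.e. Var(χ_c(τ,ν)) = Σ_{0 < |n| < L} (L − |n|)·|ψ(τ + nT, ν)|². -/
open MeasureTheory ProbabilityTheory Complex

/-- The variance `Var(X) = E[|X|²] − |E[X]|²` of a complex random variable. -/
noncomputable def cVar {Ω : Type*} [MeasureSpace Ω] (X : Ω → ℂ) : ℝ :=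
  (∫ ω, ‖X ω‖ ^ 2) - ‖∫ ω, X ω‖ ^ 2

lemma amgm4 {x y z w : ℝ} (hx : 0 ≤ x) (hy : 0 ≤ y) (hz : 0 ≤ z) (hw : 0 ≤ w) :
    x * y * z * w ≤ x ^ 4 + y ^ 4 + z ^ 4 + w ^ 4 := by
  have h1 : x * y * (z * w) ≤ ((x*y)^2 + (z*w)^2) / 2 := by nlinarith [sq_nonneg (x*y - z*w)]
  have h2 : (x*y)^2 ≤ (x^4 + y^4) / 2 := by nlinarith [sq_nonneg (x^2 - y^2)]
  have h3 : (z*w)^2 ≤ (z^4 + w^4) / 2 := by nlinarith [sq_nonneg (z^2 - w^2)]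
  nlinarith [pow_nonneg hx 4, pow_nonneg hy 4, pow_nonneg hz 4, pow_nonneg hw 4]

lemma amgm3 {x y z : ℝ} (hx : 0 ≤ x) (hy : 0 ≤ y) (hz : 0 ≤ z) :
    x * y * z ≤ 1 + (x ^ 4 + y ^ 4 + z ^ 4) := by
  have h := amgm4 hx hy hz (zero_le_one (α := ℝ))
  nlinarith [h]

lemma le_one_add_pow4 {x : ℝ} (hx : 0 ≤ x) : x ≤ 1 + x ^ 4 := by
  nlinarith [sq_nonneg (x^2 - 1), sq_nonneg (x^2 - x), sq_nonneg (x - 1), sq_nonneg x]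

lemma sq_le_one_add_pow4 {x : ℝ} (hx : 0 ≤ x) : x ^ 2 ≤ 1 + x ^ 4 := by
  nlinarith [sq_nonneg (x^2 - 1)]

lemma ProbabilityTheory.IndepFun.integral_mul_complex {Ω : Type*} {mΩ : MeasurableSpace Ω} {μ : Measure Ω}
    {X Y : Ω → ℂ} (h : IndepFun X Y μ) (hX : Integrable X μ) (hY : Integrable Y μ) :
    ∫ ω, X ω * Y ω ∂μ = (∫ ω, X ω ∂μ) * ∫ ω, Y ω ∂μ := by
  have hXY : Integrable (fun ω => X ω * Y ω) μ := h.integrable_mul hX hY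
  have ha : Integrable (fun ω => (X ω).re) μ := hX.re
  have hb : Integrable (fun ω => (X ω).im) μ := hX.im
  have hc : Integrable (fun ω => (Y ω).re) μ := hY.re
  have hd : Integrable (fun ω => (Y ω).im) μ := hY.im
  have hac : IndepFun (fun ω => (X ω).re) (fun ω => (Y ω).re) μ :=
    h.comp Complex.measurable_re Complex.measurable_re
  have had : IndepFun (fun ω => (X ω).re) (fun ω => (Y ω).im) μ :=
    h.comp Complex.measurable_re Complex.measurable_im
  have hbc : IndepFun (fun ω => (X ω).im) (fun ω => (Y ω).re) μ :=
    h.comp Complex.measurable_im Complex.measurable_re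
  have hbd : IndepFun (fun ω => (X ω).im) (fun ω => (Y ω).im) μ :=
    h.comp Complex.measurable_im Complex.measurable_im
  have Iac : (∫ ω, (X ω).re * (Y ω).re ∂μ) = (∫ ω, (X ω).re ∂μ) * ∫ ω, (Y ω).re ∂μ := hac.integral_fun_mul_eq_mul_integral ha.aestronglyMeasurable hc.aestronglyMeasurable
  have Iad : (∫ ω, (X ω).re * (Y ω).im ∂μ) = (∫ ω, (X ω).re ∂μ) * ∫ ω, (Y ω).im ∂μ := had.integral_fun_mul_eq_mul_integral ha.aestronglyMeasurable hd.aestronglyMeasurable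
  have Ibc : (∫ ω, (X ω).im * (Y ω).re ∂μ) = (∫ ω, (X ω).im ∂μ) * ∫ ω, (Y ω).re ∂μ := hbc.integral_fun_mul_eq_mul_integral hb.aestronglyMeasurable hc.aestronglyMeasurable
  have Ibd : (∫ ω, (X ω).im * (Y ω).im ∂μ) = (∫ ω, (X ω).im ∂μ) * ∫ ω, (Y ω).im ∂μ := hbd.integral_fun_mul_eq_mul_integral hb.aestronglyMeasurable hd.aestronglyMeasurable
  have hre : ∀ {f : Ω → ℂ}, Integrable f μ → ∫ ω, (f ω).re ∂μ = (∫ ω, f ω ∂μ).re :=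
    fun hf => integral_re hf
  have him : ∀ {f : Ω → ℂ}, Integrable f μ → ∫ ω, (f ω).im ∂μ = (∫ ω, f ω ∂μ).im :=
    fun hf => integral_im hf
  have m1 : Integrable (fun ω => (X ω).re * (Y ω).re) μ := hac.integrable_mul ha hc
  have m2 : Integrable (fun ω => (X ω).im * (Y ω).im) μ := hbd.integrable_mul hb hd
  have m3 : Integrable (fun ω => (X ω).re * (Y ω).im) μ := had.integrable_mul ha hd
  have m4 : Integrable (fun ω => (X ω).im * (Y ω).re) μ := hbc.integrable_mul hb hc
  apply Complex.ext
  · rw [← hre hXY]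
    have e : ∀ ω, (X ω * Y ω).re = (X ω).re * (Y ω).re - (X ω).im * (Y ω).im :=
      fun ω => Complex.mul_re _ _
    rw [integral_congr_ae (Filter.Eventually.of_forall e), integral_sub m1 m2,
      Iac, Ibd, Complex.mul_re, ← hre hX, ← hre hY, ← him hX, ← him hY]
  · rw [← him hXY]
    have e : ∀ ω, (X ω * Y ω).im = (X ω).re * (Y ω).im + (X ω).im * (Y ω).re :=
      fun ω => Complex.mul_im _ _
    rw [integral_congr_ae (Filter.Eventually.of_forall e), integral_add m3 m4,
      Iad, Ibc, Complex.mul_im, ← hre hX, ← hre hY, ← him hX, ← him hY]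

lemma comb1 (F : ℤ → ℝ) (L : ℕ) :
    ∑ n ∈ Finset.range L, ∑ m ∈ Finset.range L, (if m ≠ n then F ((m : ℤ) - n) else 0)
      = ∑ k ∈ Finset.Ico 1 L, ((L : ℝ) - k) * (F (-(k : ℤ)) + F (k : ℤ)) := by
  induction L with
  | zero => simp
  | succ L ih =>
    rw [Finset.sum_range_succ]
    simp_rw [Finset.sum_range_succ]
    rw [Finset.sum_add_distrib, ih]
    have h0 : (if (L : ℕ) ≠ L then F ((L : ℤ) - L) else 0) = 0 := by simp
    have h1 : ∑ n ∈ Finset.range L, (if L ≠ n then F ((L : ℤ) - n) else 0)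
        = ∑ n ∈ Finset.range L, F ((L : ℤ) - n) := by
      refine Finset.sum_congr rfl fun n hn => ?_
      rw [if_pos]
      exact fun h => absurd (Finset.mem_range.mp hn) (by omega)
    have h2 : ∑ m ∈ Finset.range L, (if m ≠ L then F ((m : ℤ) - L) else 0)
        = ∑ m ∈ Finset.range L, F ((m : ℤ) - L) := by
      refine Finset.sum_congr rfl fun m hm => ?_
      rw [if_pos]
      exact fun h => absurd (Finset.mem_range.mp hm) (by omega)
    rw [h0, h1, h2]
    have key : ∑ m ∈ Finset.range L, F ((m : ℤ) - L) + ∑ n ∈ Finset.range L, F ((L : ℤ) - n)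
        = ∑ k ∈ Finset.Ico 1 (L + 1), (F (-(k : ℤ)) + F (k : ℤ)) := by
      rw [Finset.sum_Ico_eq_sum_range]
      simp only [Nat.add_sub_cancel]
      rw [Finset.sum_add_distrib]
      congr 1
      · rw [← Finset.sum_range_reflect]
        refine Finset.sum_congr rfl fun j hj => ?_
        have hjL := Finset.mem_range.mp hj
        congr 1
        push_cast [Nat.sub_sub]
        omega
      · rw [← Finset.sum_range_reflect]
        refine Finset.sum_congr rfl fun j hj => ?_
        have hjL := Finset.mem_range.mp hj
        congr 1
        push_cast [Nat.sub_sub]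
        omega
    have hsplit : ∑ k ∈ Finset.Ico 1 (L + 1), ((L : ℝ) + 1 - k) * (F (-(k : ℤ)) + F (k : ℤ))
        = ∑ k ∈ Finset.Ico 1 L, ((L : ℝ) - k) * (F (-(k : ℤ)) + F (k : ℤ))
          + ∑ k ∈ Finset.Ico 1 (L + 1), (F (-(k : ℤ)) + F (k : ℤ)) := by
      by_cases hL : 1 ≤ L
      · rw [Finset.sum_Ico_succ_top hL, Finset.sum_Ico_succ_top hL]
        have he : ∀ k : ℕ, ((L : ℝ) + 1 - k) * (F (-(k:ℤ)) + F (k:ℤ))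
            = ((L : ℝ) - k) * (F (-(k:ℤ)) + F (k:ℤ)) + (F (-(k:ℤ)) + F (k:ℤ)) := by
          intro k; ring
        simp_rw [he]
        rw [Finset.sum_add_distrib]
        ring
      · have hL0 : L = 0 := by omega
        subst hL0
        simp
    push_cast at hsplit ⊢
    rw [hsplit, ← key]
    ring

lemma comb2 (F : ℤ → ℝ) (L : ℕ) :
    ∑ k ∈ Finset.Ico 1 L, ((L : ℝ) - k) * (F (-(k : ℤ)) + F (k : ℤ))
      = ∑ k ∈ (Finset.Ioo (-(L : ℤ)) (L : ℤ)).erase 0, ((L : ℝ) - |(k : ℝ)|) * F k := by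
  classical
  have hD : (Finset.Ioo (-(L : ℤ)) (L : ℤ)).erase 0
      = ((Finset.Ico 1 L).image fun k : ℕ => (k : ℤ))
        ∪ ((Finset.Ico 1 L).image fun k : ℕ => -(k : ℤ)) := by
    ext k
    simp only [Finset.mem_erase, Finset.mem_Ioo, Finset.mem_union, Finset.mem_image,
      Finset.mem_Ico]
    constructor
    · rintro ⟨h0, h1, h2⟩
      rcases lt_or_gt_of_ne h0 with h | h
      · right; exact ⟨(-k).toNat, by omega, by omega⟩
      · left; exact ⟨k.toNat, by omega, by omega⟩
    · rintro (⟨a, ⟨ha1, ha2⟩, rfl⟩ | ⟨a, ⟨ha1, ha2⟩, rfl⟩) <;>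
        refine ⟨by omega, by omega, by omega⟩
  have hdisj : Disjoint ((Finset.Ico 1 L).image fun k : ℕ => (k : ℤ))
      ((Finset.Ico 1 L).image fun k : ℕ => -(k : ℤ)) := by
    rw [Finset.disjoint_left]
    rintro x hx hy
    simp only [Finset.mem_image, Finset.mem_Ico] at hx hy
    obtain ⟨a, ⟨ha1, _⟩, rfl⟩ := hx
    obtain ⟨b, ⟨hb1, _⟩, hb⟩ := hy
    omega
  rw [hD, Finset.sum_union hdisj, Finset.sum_image (by intro a _ b _ h; simp at h; omega),
    Finset.sum_image (by intro a _ b _ h; simp at h; omega)]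
  rw [← Finset.sum_add_distrib]
  refine Finset.sum_congr rfl fun k hk => ?_
  have hk1 : 1 ≤ k := (Finset.mem_Ico.mp hk).1
  push_cast
  rw [abs_neg, _root_.abs_of_nonneg (by positivity : (0:ℝ) ≤ (k:ℝ))]
  ring

lemma sum_pairs {M : Type*} [AddCommMonoid M] (L : ℕ) (g : Fin L → Fin L → M) :
    ∑ n : Fin L, ∑ m ∈ Finset.univ.erase n, g n m
      = ∑ p ∈ Finset.univ.filter (fun p : Fin L × Fin L => p.2 ≠ p.1), g p.1 p.2 := by
  rw [Finset.sum_filter, Fintype.sum_prod_type]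
  refine Finset.sum_congr rfl fun n _ => ?_
  rw [← Finset.filter_ne', Finset.sum_filter]

lemma abs_psiNM (ψ : ℝ × ℝ → ℂ) (T τ ν : ℝ) (n m : ℕ) :
    ‖psiNM ψ T τ ν n m‖
      = ‖ψ (τ + ((((m : ℤ) - (n : ℤ)) : ℤ) : ℝ) * T, ν)‖ := by
  unfold psiNM
  rw [norm_mul]
  have he : (-2 * (Real.pi : ℂ) * Complex.I * (n : ℂ) * (ν : ℂ) * (T : ℂ))
      = (((-2 * Real.pi * n * ν * T : ℝ)) : ℂ) * Complex.I := by
    push_cast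
    ring
  rw [he, Complex.norm_exp_ofReal_mul_I, one_mul]
  have harg : τ + ((m : ℝ) - (n : ℝ)) * T = τ + ((((m : ℤ) - (n : ℤ)) : ℤ) : ℝ) * T := by
    push_cast
    ring
  rw [harg]

lemma chi_moments {Ω : Type*} [MeasureSpace Ω] [IsProbabilityMeasure (ℙ : Measure Ω)]
    (L : ℕ) (s : Fin L → Ω → ℂ)
    (hmeas : ∀ n : Fin L, Measurable (s n))
    (hindep : iIndepFun s ℙ)
    (hmean : ∀ n : Fin L, ∫ ω, s n ω ∂ℙ = 0)
    (hpseudo : ∀ n : Fin L, ∫ ω, (s n ω) ^ 2 ∂ℙ = 0)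
    (hE2 : ∀ n : Fin L, ∫ ω, (‖s n ω‖) ^ 2 ∂ℙ = 1)
    (hmom4 : ∀ n : Fin L, Integrable (fun ω => (‖s n ω‖) ^ 4) ℙ)
    (cc : Fin L × Fin L → ℂ) :
    (∫ ω, (∑ p ∈ Finset.univ.filter (fun p : Fin L × Fin L => p.2 ≠ p.1),
        s p.1 ω * (starRingEnd ℂ) (s p.2 ω) * cc p) ∂ℙ) = 0
    ∧ (∫ ω, (‖∑ p ∈ Finset.univ.filter (fun p : Fin L × Fin L => p.2 ≠ p.1),
        s p.1 ω * (starRingEnd ℂ) (s p.2 ω) * cc p‖) ^ 2 ∂ℙ)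
      = ∑ p ∈ Finset.univ.filter (fun p : Fin L × Fin L => p.2 ≠ p.1),
          (‖cc p‖) ^ 2 := by
  classical
  set P : Finset (Fin L × Fin L) := Finset.univ.filter (fun p : Fin L × Fin L => p.2 ≠ p.1)
    with hPdef
  have hmc : Measurable (starRingEnd ℂ) := Complex.continuous_conj.measurable
  -- generic integrability via a real dominating function
  have hmono : ∀ (f : Ω → ℂ) (g : Ω → ℝ), Integrable g ℙ → AEStronglyMeasurable f ℙ →
      (∀ ω, ‖f ω‖ ≤ g ω) → Integrable f ℙ := by
    intro f g hg hf hb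
    refine hg.mono hf (ae_of_all _ fun ω => ?_)
    rw [Real.norm_eq_abs]
    exact (hb ω).trans (le_abs_self _)
  have hg1 : ∀ n : Fin L, Integrable (fun ω => 1 + (‖s n ω‖) ^ 4) ℙ :=
    fun n => (integrable_const 1).add (hmom4 n)
  have hInt1 : ∀ n : Fin L, Integrable (s n) ℙ := by
    intro n
    refine hmono _ _ (hg1 n) (hmeas n).aestronglyMeasurable fun ω => ?_
    exact le_one_add_pow4 (norm_nonneg _)
  have hInt1c : ∀ n : Fin L, Integrable (fun ω => (starRingEnd ℂ) (s n ω)) ℙ := by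
    intro n
    refine hmono _ _ (hg1 n) (hmc.comp (hmeas n)).aestronglyMeasurable fun ω => ?_
    rw [Complex.norm_conj]
    exact le_one_add_pow4 (norm_nonneg _)
  have hIntZZ : ∀ n : Fin L, Integrable (fun ω => s n ω * (starRingEnd ℂ) (s n ω)) ℙ := by
    intro n
    refine hmono _ _ (hg1 n) ((hmeas n).mul (hmc.comp (hmeas n))).aestronglyMeasurable
      fun ω => ?_
    rw [norm_mul, Complex.norm_conj, ← sq]
    exact sq_le_one_add_pow4 (norm_nonneg _)
  have hIntSq : ∀ n : Fin L, Integrable (fun ω => (s n ω) ^ 2) ℙ := by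
    intro n
    refine hmono _ _ (hg1 n) ((hmeas n).pow_const 2).aestronglyMeasurable fun ω => ?_
    rw [norm_pow]
    exact sq_le_one_add_pow4 (norm_nonneg _)
  have hIntSqc : ∀ n : Fin L, Integrable (fun ω => ((starRingEnd ℂ) (s n ω)) ^ 2) ℙ := by
    intro n
    refine hmono _ _ (hg1 n) ((hmc.comp (hmeas n)).pow_const 2).aestronglyMeasurable
      fun ω => ?_
    rw [norm_pow, Complex.norm_conj]
    exact sq_le_one_add_pow4 (norm_nonneg _)
  have hint4 : ∀ a b c d : Fin L, Integrable
      (fun ω => s a ω * (starRingEnd ℂ) (s b ω) * (starRingEnd ℂ) (s c ω) * s d ω) ℙ := by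
    intro a b c d
    have hg : Integrable (fun ω => (‖s a ω‖) ^ 4 + (‖s b ω‖) ^ 4
        + (‖s c ω‖) ^ 4 + (‖s d ω‖) ^ 4) ℙ :=
      (((hmom4 a).add (hmom4 b)).add (hmom4 c)).add (hmom4 d)
    refine hmono _ _ hg ?_ fun ω => ?_
    · exact ((((hmeas a).mul (hmc.comp (hmeas b))).mul (hmc.comp (hmeas c))).mul
        (hmeas d)).aestronglyMeasurable
    · rw [norm_mul, norm_mul, norm_mul, Complex.norm_conj, Complex.norm_conj]
      exact amgm4 (norm_nonneg _) (norm_nonneg _)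
        (norm_nonneg _) (norm_nonneg _)
  have hint3 : ∀ (b c d : Fin L) (f : Ω → ℂ), Measurable f →
      (∀ ω, ‖f ω‖
        = ‖s b ω‖ * ‖s c ω‖ * ‖s d ω‖) →
      Integrable f ℙ := by
    intro b c d f hf hb
    have hg : Integrable (fun ω => 1 + ((‖s b ω‖) ^ 4 + (‖s c ω‖) ^ 4
        + (‖s d ω‖) ^ 4)) ℙ :=
      (integrable_const 1).add (((hmom4 b).add (hmom4 c)).add (hmom4 d))
    refine hmono _ _ hg hf.aestronglyMeasurable fun ω => ?_
    rw [hb ω]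
    exact amgm3 (norm_nonneg _) (norm_nonneg _) (norm_nonneg _)
  -- expectations
  have hconjmean : ∀ n : Fin L, ∫ ω, (starRingEnd ℂ) (s n ω) ∂ℙ = 0 := by
    intro n
    rw [integral_conj, hmean n, map_zero]
  have hInt2R : ∀ n : Fin L, Integrable (fun ω => (‖s n ω‖) ^ 2) ℙ := by
    intro n
    refine (hg1 n).mono ((((continuous_norm.measurable).comp
      (hmeas n)).pow_const 2).aestronglyMeasurable) (ae_of_all _ fun ω => ?_)
    rw [Real.norm_eq_abs, Real.norm_eq_abs, _root_.abs_of_nonneg (by positivity : (0:ℝ) ≤ ‖s n ω‖ ^ 2),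
      _root_.abs_of_nonneg (by positivity : (0:ℝ) ≤ 1 + ‖s n ω‖ ^ 4)]
    exact sq_le_one_add_pow4 (norm_nonneg _)
  have hEZZ : ∀ n : Fin L, ∫ ω, s n ω * (starRingEnd ℂ) (s n ω) ∂ℙ = 1 := by
    intro n
    have he : (fun ω => s n ω * (starRingEnd ℂ) (s n ω))
        = fun ω => (((‖s n ω‖) ^ 2 : ℝ) : ℂ) := by
      funext ω
      rw [Complex.mul_conj, Complex.normSq_eq_norm_sq]
    rw [he]
    have hfm : AEStronglyMeasurable (fun ω => (((‖s n ω‖) ^ 2 : ℝ) : ℂ)) ℙ :=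
      (Complex.measurable_ofReal.comp (((continuous_norm.measurable).comp
        (hmeas n)).pow_const 2)).aestronglyMeasurable
    have hfint : Integrable (fun ω => (((‖s n ω‖) ^ 2 : ℝ) : ℂ)) ℙ := by
      refine hmono _ _ (hInt2R n) hfm fun ω => ?_
      rw [Complex.norm_real, Real.norm_eq_abs, _root_.abs_of_nonneg (by positivity)]
    have hre : ∫ ω, ((((‖s n ω‖) ^ 2 : ℝ) : ℂ)).re ∂ℙ
        = (∫ ω, (((‖s n ω‖) ^ 2 : ℝ) : ℂ) ∂ℙ).re := integral_re hfint
    have him : ∫ ω, ((((‖s n ω‖) ^ 2 : ℝ) : ℂ)).im ∂ℙ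
        = (∫ ω, (((‖s n ω‖) ^ 2 : ℝ) : ℂ) ∂ℙ).im := integral_im hfint
    simp only [Complex.ofReal_re] at hre
    simp only [Complex.ofReal_im] at him
    apply Complex.ext
    · rw [← hre, hE2 n, Complex.one_re]
    · rw [← him]
      simp
  -- the factorization workhorse
  have hfactor : ∀ (i j k l : Fin L), i ≠ j → i ≠ k → i ≠ l →
      ∀ (u v w x : ℂ → ℂ), Measurable u → Measurable v → Measurable w → Measurable x →
      IndepFun (fun ω => u (s i ω)) (fun ω => v (s j ω) * w (s k ω) * x (s l ω)) ℙ := by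
    intro i j k l hij hik hil u v w x hu hv hw hx
    have hdisj : Disjoint ({i} : Finset (Fin L)) ({j, k, l} : Finset (Fin L)) := by
      simp only [Finset.disjoint_left, Finset.mem_singleton, Finset.mem_insert]
      rintro a rfl
      simp [hij, hik, hil]
    have h := hindep.indepFun_finset {i} {j, k, l} hdisj hmeas
    have hii : i ∈ ({i} : Finset (Fin L)) := by simp
    have hji : j ∈ ({j, k, l} : Finset (Fin L)) := by simp
    have hki : k ∈ ({j, k, l} : Finset (Fin L)) := by simp
    have hli : l ∈ ({j, k, l} : Finset (Fin L)) := by simp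
    exact h.comp (φ := fun f : (({i} : Finset (Fin L)) → ℂ) => u (f ⟨i, hii⟩))
      (ψ := fun f : (({j, k, l} : Finset (Fin L)) → ℂ) =>
        v (f ⟨j, hji⟩) * w (f ⟨k, hki⟩) * x (f ⟨l, hli⟩))
      (hu.comp (measurable_pi_apply _))
      (((hv.comp (measurable_pi_apply _)).mul (hw.comp (measurable_pi_apply _))).mul
        (hx.comp (measurable_pi_apply _)))
  -- zero cases
  have hzero1 : ∀ a b c d : Fin L, a ≠ b → a ≠ c → a ≠ d →
      (∫ ω, s a ω * ((starRingEnd ℂ) (s b ω) * (starRingEnd ℂ) (s c ω) * s d ω) ∂ℙ) = 0 := by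
    intro a b c d hab hac had
    have hI := hfactor a b c d hab hac had id (starRingEnd ℂ) (starRingEnd ℂ) id
      measurable_id hmc hmc measurable_id
    simp only [id_eq] at hI
    have hrest : Integrable (fun ω => (starRingEnd ℂ) (s b ω) * (starRingEnd ℂ) (s c ω)
        * s d ω) ℙ := by
      refine hint3 b c d _ (((hmc.comp (hmeas b)).mul (hmc.comp (hmeas c))).mul (hmeas d))
        fun ω => ?_
      rw [norm_mul, norm_mul, Complex.norm_conj, Complex.norm_conj]
    rw [hI.integral_mul_complex (hInt1 a) hrest, hmean a, zero_mul]
  have hzero2 : ∀ a b c d : Fin L, b ≠ a → b ≠ c → b ≠ d →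
      (∫ ω, (starRingEnd ℂ) (s b ω) * (s a ω * (starRingEnd ℂ) (s c ω) * s d ω) ∂ℙ) = 0 := by
    intro a b c d hba hbc hbd
    have hI := hfactor b a c d hba hbc hbd (starRingEnd ℂ) id (starRingEnd ℂ) id
      hmc measurable_id hmc measurable_id
    simp only [id_eq] at hI
    have hrest : Integrable (fun ω => s a ω * (starRingEnd ℂ) (s c ω) * s d ω) ℙ := by
      refine hint3 a c d _ (((hmeas a).mul (hmc.comp (hmeas c))).mul (hmeas d)) fun ω => ?_
      rw [norm_mul, norm_mul, Complex.norm_conj]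
    rw [hI.integral_mul_complex (hInt1c b) hrest, hconjmean b, zero_mul]
  -- the fourth-moment table
  have hK : ∀ a b c d : Fin L, b ≠ a → d ≠ c →
      (∫ ω, s a ω * (starRingEnd ℂ) (s b ω) * (starRingEnd ℂ) (s c ω) * s d ω ∂ℙ)
        = if (a, b) = (c, d) then 1 else 0 := by
    intro a b c d hba hdc
    by_cases hpq : (a, b) = (c, d)
    · rw [if_pos hpq]
      injection hpq with h1 h2
      subst h1; subst h2
      have hrw : (fun ω => s a ω * (starRingEnd ℂ) (s b ω) * (starRingEnd ℂ) (s a ω) * s b ω)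
          = fun ω => (s a ω * (starRingEnd ℂ) (s a ω)) * (s b ω * (starRingEnd ℂ) (s b ω)) := by
        funext ω; ring
      have hI : IndepFun (fun ω => s a ω * (starRingEnd ℂ) (s a ω))
          (fun ω => s b ω * (starRingEnd ℂ) (s b ω)) ℙ :=
        (hindep.indepFun (Ne.symm hba)).comp (φ := fun z : ℂ => z * (starRingEnd ℂ) z)
          (ψ := fun z : ℂ => z * (starRingEnd ℂ) z)
          (measurable_id.mul hmc) (measurable_id.mul hmc)
      rw [hrw, hI.integral_mul_complex (hIntZZ a) (hIntZZ b), hEZZ a, hEZZ b, one_mul]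
    · rw [if_neg hpq]
      by_cases h1 : a = c
      · subst h1
        have hbd : b ≠ d := fun h => hpq (by rw [h])
        have hrw : (fun ω => s a ω * (starRingEnd ℂ) (s b ω) * (starRingEnd ℂ) (s a ω) * s d ω)
            = fun ω => (starRingEnd ℂ) (s b ω)
                * (s a ω * (starRingEnd ℂ) (s a ω) * s d ω) := by
          funext ω; ring
        rw [hrw]
        exact hzero2 a b a d hba hba hbd
      · by_cases h3 : a = d
        · subst h3
          by_cases h4 : b = c
          · subst h4
            have hrw : (fun ω => s a ω * (starRingEnd ℂ) (s b ω) * (starRingEnd ℂ) (s b ω)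
                  * s a ω)
                = fun ω => (s a ω) ^ 2 * ((starRingEnd ℂ) (s b ω)) ^ 2 := by
              funext ω; ring
            have hI : IndepFun (fun ω => (s a ω) ^ 2) (fun ω => ((starRingEnd ℂ) (s b ω)) ^ 2) ℙ :=
              (hindep.indepFun (Ne.symm hba)).comp (φ := fun z : ℂ => z ^ 2)
                (ψ := fun z : ℂ => ((starRingEnd ℂ) z) ^ 2)
                (measurable_id.pow_const 2) ((hmc.pow_const 2))
            rw [hrw, hI.integral_mul_complex (hIntSq a) (hIntSqc b), hpseudo a, zero_mul]
          · -- b lonely: b ≠ a, b ≠ c, b ≠ d (= a)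
            have hrw : (fun ω => s a ω * (starRingEnd ℂ) (s b ω) * (starRingEnd ℂ) (s c ω)
                  * s a ω)
                = fun ω => (starRingEnd ℂ) (s b ω)
                    * (s a ω * (starRingEnd ℂ) (s c ω) * s a ω) := by
              funext ω; ring
            rw [hrw]
            exact hzero2 a b c a hba h4 hba
        · -- a lonely: a ≠ b, a ≠ c, a ≠ d
          have hrw : (fun ω => s a ω * (starRingEnd ℂ) (s b ω) * (starRingEnd ℂ) (s c ω)
                * s d ω)
              = fun ω => s a ω
                  * ((starRingEnd ℂ) (s b ω) * (starRingEnd ℂ) (s c ω) * s d ω) := by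
            funext ω; ring
          rw [hrw]
          exact hzero1 a b c d (Ne.symm hba) h1 h3
  -- part 1: mean zero
  have hIntT : ∀ p : Fin L × Fin L, p ∈ P →
      Integrable (fun ω => s p.1 ω * (starRingEnd ℂ) (s p.2 ω) * cc p) ℙ := by
    intro p hp
    have hne : p.1 ≠ p.2 := Ne.symm (Finset.mem_filter.mp hp).2
    have hI : IndepFun (s p.1) (fun ω => (starRingEnd ℂ) (s p.2 ω)) ℙ :=
      (hindep.indepFun hne).comp measurable_id hmc
    have := hI.integrable_mul (hInt1 p.1) (hInt1c p.2)
    exact this.mul_const (cc p)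
  have hmean0 : (∫ ω, (∑ p ∈ P, s p.1 ω * (starRingEnd ℂ) (s p.2 ω) * cc p) ∂ℙ) = 0 := by
    rw [integral_finset_sum P hIntT]
    refine Finset.sum_eq_zero fun p hp => ?_
    have hne : p.1 ≠ p.2 := Ne.symm (Finset.mem_filter.mp hp).2
    have hI : IndepFun (s p.1) (fun ω => (starRingEnd ℂ) (s p.2 ω)) ℙ :=
      (hindep.indepFun hne).comp measurable_id hmc
    rw [integral_mul_const, hI.integral_mul_complex (hInt1 p.1) (hInt1c p.2), hmean p.1,
      zero_mul, zero_mul]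
  refine ⟨hmean0, ?_⟩
  -- part 2: second moment
  have hW : ∀ ω, (‖∑ p ∈ P, s p.1 ω * (starRingEnd ℂ) (s p.2 ω) * cc p‖) ^ 2
      = (∑ p ∈ P, ∑ q ∈ P, (cc p * (starRingEnd ℂ) (cc q))
          * (s p.1 ω * (starRingEnd ℂ) (s p.2 ω) * (starRingEnd ℂ) (s q.1 ω) * s q.2 ω)).re := by
    intro ω
    set z := ∑ p ∈ P, s p.1 ω * (starRingEnd ℂ) (s p.2 ω) * cc p with hz
    have h1 : ‖z‖ ^ 2 = (z * (starRingEnd ℂ) z).re := by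
      rw [Complex.mul_conj, Complex.ofReal_re]
      exact Complex.sq_norm z
    rw [h1]
    congr 1
    rw [hz, map_sum, Finset.sum_mul_sum]
    refine Finset.sum_congr rfl fun p _ => Finset.sum_congr rfl fun q _ => ?_
    simp only [map_mul, Complex.conj_conj]
    ring
  have hWint : Integrable (fun ω => ∑ p ∈ P, ∑ q ∈ P, (cc p * (starRingEnd ℂ) (cc q))
      * (s p.1 ω * (starRingEnd ℂ) (s p.2 ω) * (starRingEnd ℂ) (s q.1 ω) * s q.2 ω)) ℙ := by
    refine integrable_finset_sum P fun p _ => integrable_finset_sum P fun q _ => ?_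
    exact (hint4 p.1 p.2 q.1 q.2).const_mul _
  have hre2 : (∫ ω, (∑ p ∈ P, ∑ q ∈ P, (cc p * (starRingEnd ℂ) (cc q))
      * (s p.1 ω * (starRingEnd ℂ) (s p.2 ω) * (starRingEnd ℂ) (s q.1 ω) * s q.2 ω)).re ∂ℙ)
      = (∫ ω, (∑ p ∈ P, ∑ q ∈ P, (cc p * (starRingEnd ℂ) (cc q))
        * (s p.1 ω * (starRingEnd ℂ) (s p.2 ω) * (starRingEnd ℂ) (s q.1 ω) * s q.2 ω)) ∂ℙ).re :=
    integral_re hWint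
  rw [integral_congr_ae (Filter.Eventually.of_forall hW), hre2]
  have hsum : (∫ ω, (∑ p ∈ P, ∑ q ∈ P, (cc p * (starRingEnd ℂ) (cc q))
      * (s p.1 ω * (starRingEnd ℂ) (s p.2 ω) * (starRingEnd ℂ) (s q.1 ω) * s q.2 ω)) ∂ℙ)
      = ∑ p ∈ P, cc p * (starRingEnd ℂ) (cc p) := by
    rw [integral_finset_sum P (fun p _ => integrable_finset_sum P fun q _ =>
      (hint4 p.1 p.2 q.1 q.2).const_mul _)]
    refine Finset.sum_congr rfl fun p hp => ?_
    rw [integral_finset_sum P (fun q _ => (hint4 p.1 p.2 q.1 q.2).const_mul _)]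
    have hstep : ∀ q ∈ P, (∫ ω, (cc p * (starRingEnd ℂ) (cc q))
        * (s p.1 ω * (starRingEnd ℂ) (s p.2 ω) * (starRingEnd ℂ) (s q.1 ω) * s q.2 ω) ∂ℙ)
        = if p = q then cc p * (starRingEnd ℂ) (cc q) else 0 := by
      intro q hq
      rw [integral_const_mul, hK p.1 p.2 q.1 q.2 (Finset.mem_filter.mp hp).2
        (Finset.mem_filter.mp hq).2, Prod.mk.eta, Prod.mk.eta, mul_ite, mul_one, mul_zero]
    rw [Finset.sum_congr rfl hstep, Finset.sum_ite_eq P p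
      (fun q => cc p * (starRingEnd ℂ) (cc q)), if_pos hp]
  rw [hsum, Complex.re_sum]
  exact Finset.sum_congr rfl fun p _ => by
    rw [Complex.mul_conj, Complex.ofReal_re]
    exact (Complex.sq_norm _).symm

/-- The variance of the cross-ambiguity part satisfies
`Var(χ_c(τ,ν)) = Σ_{n=1}^{L−1} (L − n)·(|ψ(τ − nT, ν)|² + |ψ(τ + nT, ν)|²)
              = Σ_{0 < |n| < L} (L − |n|)·|ψ(τ + nT, ν)|²`. -/
theorem variance_cross_ambiguity
    {Ω : Type*} [MeasureSpace Ω] [IsProbabilityMeasure (ℙ : Measure Ω)]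
    (L : ℕ) (hL : 1 ≤ L) (T : ℝ) (hT : 0 < T) (τ ν : ℝ)
    (ψ : ℝ × ℝ → ℂ) (s : Fin L → Ω → ℂ)
    (hmeas : ∀ n : Fin L, Measurable (s n))
    (hindep : iIndepFun s ℙ)
    (hmean : ∀ n : Fin L, ∫ ω, s n ω ∂ℙ = 0)
    (hpseudo : ∀ n : Fin L, ∫ ω, (s n ω) ^ 2 ∂ℙ = 0)
    (hE2 : ∀ n : Fin L, ∫ ω, ‖s n ω‖ ^ 2 ∂ℙ = 1)
    (hmom4 : ∀ n : Fin L, Integrable (fun ω => ‖s n ω‖ ^ 4) ℙ) :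
    cVar (chiC L ψ T τ ν s)
        = ∑ n ∈ Finset.Ico 1 L, ((L : ℝ) - n) *
            (‖ψ (τ - n * T, ν)‖ ^ 2 + ‖ψ (τ + n * T, ν)‖ ^ 2)
      ∧ cVar (chiC L ψ T τ ν s)
        = ∑ n ∈ (Finset.Ioo (-(L : ℤ)) (L : ℤ)).erase 0, ((L : ℝ) - |(n : ℝ)|) *
            ‖ψ (τ + n * T, ν)‖ ^ 2 := by
  classical
  set F : ℤ → ℝ := fun k => (‖ψ (τ + (k : ℝ) * T, ν)‖) ^ 2 with hF
  set P : Finset (Fin L × Fin L) := Finset.univ.filter (fun p : Fin L × Fin L => p.2 ≠ p.1)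
    with hPdef
  obtain ⟨hmean0, hsec⟩ := chi_moments L s hmeas hindep hmean hpseudo hE2 hmom4
    (fun p => psiNM ψ T τ ν p.1 p.2)
  have hchi : chiC L ψ T τ ν s
      = fun ω => ∑ p ∈ P, s p.1 ω * (starRingEnd ℂ) (s p.2 ω) * psiNM ψ T τ ν p.1 p.2 := by
    funext ω
    exact sum_pairs L (fun n m => s n ω * (starRingEnd ℂ) (s m ω) * psiNM ψ T τ ν n m)
  have hvar : cVar (chiC L ψ T τ ν s)
      = ∑ p ∈ P, (‖psiNM ψ T τ ν p.1 p.2‖) ^ 2 := by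
    unfold cVar
    simp only [hchi]
    rw [hsec, hmean0]
    simp [hPdef]
  have hvarF : cVar (chiC L ψ T τ ν s)
      = ∑ n ∈ Finset.range L, ∑ m ∈ Finset.range L,
          (if m ≠ n then F ((m : ℤ) - (n : ℤ)) else 0) := by
    rw [hvar]
    have h1 : ∑ p ∈ P, (‖psiNM ψ T τ ν p.1 p.2‖) ^ 2
        = ∑ p ∈ P, F (((p.2 : ℕ) : ℤ) - ((p.1 : ℕ) : ℤ)) := by
      refine Finset.sum_congr rfl fun p _ => ?_
      rw [abs_psiNM]
    rw [h1, ← sum_pairs L (fun n m => F (((m : ℕ) : ℤ) - ((n : ℕ) : ℤ)))]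
    have h2 : ∀ n : Fin L, ∑ m ∈ Finset.univ.erase n, F (((m : ℕ) : ℤ) - ((n : ℕ) : ℤ))
        = ∑ m : Fin L, (if (m : ℕ) ≠ (n : ℕ) then F (((m : ℕ) : ℤ) - ((n : ℕ) : ℤ)) else 0) := by
      intro n
      rw [← Finset.filter_ne', Finset.sum_filter]
      refine Finset.sum_congr rfl fun m _ => ?_
      exact if_congr (by simp [Fin.ext_iff]) rfl rfl
    rw [Finset.sum_congr rfl fun n _ => h2 n]
    rw [Fin.sum_univ_eq_sum_range (fun nv => ∑ m : Fin L,
      (if (m : ℕ) ≠ nv then F (((m : ℕ) : ℤ) - (nv : ℤ)) else 0)) L]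
    refine Finset.sum_congr rfl fun n _ => ?_
    exact Fin.sum_univ_eq_sum_range (fun mv => (if mv ≠ n then F ((mv : ℤ) - (n : ℤ)) else 0)) L
  constructor
  · rw [hvarF, comb1 F L]
    refine Finset.sum_congr rfl fun n _ => ?_
    have hneg : F (-(n : ℤ)) = (‖ψ (τ - n * T, ν)‖) ^ 2 := by
      simp only [hF]
      have harg : τ + ((-(n : ℤ) : ℤ) : ℝ) * T = τ - n * T := by push_cast; ring
      rw [harg]
    have hpos : F ((n : ℤ)) = (‖ψ (τ + n * T, ν)‖) ^ 2 := by
      simp only [hF]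
      have harg : τ + (((n : ℤ) : ℤ) : ℝ) * T = τ + n * T := by push_cast; ring
      rw [harg]
    rw [hneg, hpos]
  · rw [hvarF, comb1 F L, comb2 F L]
end

section
/- Under the stated assumptions, the variance of the ambiguity function decomposes additively: Var(χ(τ,ν)) = Var(χ_s(τ,ν)) + Var(χ_c(τ,ν)). -/
open MeasureTheory ProbabilityTheory Complex

open scoped ENNReal

section Helpers

variable {Ω : Type*} [MeasureSpace Ω] [IsProbabilityMeasure (ℙ : Measure Ω)]

lemma memLp_mul' {f g : Ω → ℂ} {p q r : ℝ≥0∞} (hf : MemLp f p ℙ) (hg : MemLp g q ℙ)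
    (h : 1/r = 1/p + 1/q) : MemLp (fun ω => f ω * g ω) r ℙ := by
  haveI : ENNReal.HolderTriple p q r := ⟨by simpa only [one_div] using h.symm⟩
  have := MemLp.smul (φ := f) (r := r) hg hf
  exact this

lemma indep_integral_mul_c {X Y : Ω → ℂ} (h : IndepFun X Y ℙ) (hX : Integrable X ℙ)
    (hY : Integrable Y ℙ) : ∫ ω, X ω * Y ω = (∫ ω, X ω) * ∫ ω, Y ω := by
  have hXr : Integrable (fun ω => (X ω).re) ℙ := hX.re
  have hXi : Integrable (fun ω => (X ω).im) ℙ := hX.im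
  have hYr : Integrable (fun ω => (Y ω).re) ℙ := hY.re
  have hYi : Integrable (fun ω => (Y ω).im) ℙ := hY.im
  have iRR : IndepFun (fun ω => (X ω).re) (fun ω => (Y ω).re) ℙ :=
    h.comp Complex.measurable_re Complex.measurable_re
  have iRI : IndepFun (fun ω => (X ω).re) (fun ω => (Y ω).im) ℙ :=
    h.comp Complex.measurable_re Complex.measurable_im
  have iIR : IndepFun (fun ω => (X ω).im) (fun ω => (Y ω).re) ℙ :=
    h.comp Complex.measurable_im Complex.measurable_re
  have iII : IndepFun (fun ω => (X ω).im) (fun ω => (Y ω).im) ℙ :=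
    h.comp Complex.measurable_im Complex.measurable_im
  have hPI : Integrable (fun ω => X ω * Y ω) ℙ := h.integrable_mul hX hY
  have eRR : (∫ ω, (X ω).re * (Y ω).re) = (∫ ω, (X ω).re) * ∫ ω, (Y ω).re :=
    iRR.integral_fun_mul_eq_mul_integral hXr.aestronglyMeasurable hYr.aestronglyMeasurable
  have eRI : (∫ ω, (X ω).re * (Y ω).im) = (∫ ω, (X ω).re) * ∫ ω, (Y ω).im :=
    iRI.integral_fun_mul_eq_mul_integral hXr.aestronglyMeasurable hYi.aestronglyMeasurable
  have eIR : (∫ ω, (X ω).im * (Y ω).re) = (∫ ω, (X ω).im) * ∫ ω, (Y ω).re :=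
    iIR.integral_fun_mul_eq_mul_integral hXi.aestronglyMeasurable hYr.aestronglyMeasurable
  have eII : (∫ ω, (X ω).im * (Y ω).im) = (∫ ω, (X ω).im) * ∫ ω, (Y ω).im :=
    iII.integral_fun_mul_eq_mul_integral hXi.aestronglyMeasurable hYi.aestronglyMeasurable
  have jRR : Integrable (fun ω => (X ω).re * (Y ω).re) ℙ := iRR.integrable_mul hXr hYr
  have jRI : Integrable (fun ω => (X ω).re * (Y ω).im) ℙ := iRI.integrable_mul hXr hYi
  have jIR : Integrable (fun ω => (X ω).im * (Y ω).re) ℙ := iIR.integrable_mul hXi hYr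
  have jII : Integrable (fun ω => (X ω).im * (Y ω).im) ℙ := iII.integrable_mul hXi hYi
  have rX : ∫ ω, (X ω).re = (∫ ω, X ω).re := by simpa using integral_re hX
  have rY : ∫ ω, (Y ω).re = (∫ ω, Y ω).re := by simpa using integral_re hY
  have iX : ∫ ω, (X ω).im = (∫ ω, X ω).im := by simpa using integral_im hX
  have iY : ∫ ω, (Y ω).im = (∫ ω, Y ω).im := by simpa using integral_im hY
  have rP : ∫ ω, (X ω * Y ω).re = (∫ ω, X ω * Y ω).re := by simpa using integral_re hPI
  have iP : ∫ ω, (X ω * Y ω).im = (∫ ω, X ω * Y ω).im := by simpa using integral_im hPI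
  apply Complex.ext
  · rw [← rP, Complex.mul_re, ← rX, ← rY, ← iX, ← iY, ← eRR, ← eII, ← integral_sub jRR jII]
    simp [Complex.mul_re]
  · rw [← iP, Complex.mul_im, ← rX, ← rY, ← iX, ← iY, ← eRI, ← eIR, ← integral_add jRI jIR]
    simp [Complex.mul_im]

lemma pow_le_one_add_pow_four {x : ℝ} (hx : 0 ≤ x) {k : ℕ} (hk : k ≤ 4) :
    x ^ k ≤ 1 + x ^ 4 := by
  rcases le_total x 1 with h | h
  · have h1 : x ^ k ≤ 1 := pow_le_one₀ hx h
    have h2 : 0 ≤ x ^ 4 := pow_nonneg hx 4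
    linarith
  · have h1 : x ^ k ≤ x ^ 4 := pow_le_pow_right₀ h hk
    linarith

end Helpers

/-- The variance of the ambiguity function `χ = χ_s + χ_c` decomposes additively:
`Var(χ(τ,ν)) = Var(χ_s(τ,ν)) + Var(χ_c(τ,ν))`. -/
theorem variance_ambiguity_additive
    {Ω : Type*} [MeasureSpace Ω] [IsProbabilityMeasure (ℙ : Measure Ω)]
    (L : ℕ) (hL : 1 ≤ L) (T : ℝ) (hT : 0 < T) (τ ν : ℝ)
    (ψ : ℝ × ℝ → ℂ) (s : Fin L → Ω → ℂ)
    (hmeas : ∀ n : Fin L, Measurable (s n))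
    (hindep : iIndepFun s ℙ)
    (hmean : ∀ n : Fin L, ∫ ω, s n ω ∂ℙ = 0)
    (hpseudo : ∀ n : Fin L, ∫ ω, (s n ω) ^ 2 ∂ℙ = 0)
    (hE2 : ∀ n : Fin L, ∫ ω, ‖s n ω‖ ^ 2 ∂ℙ = 1)
    (hmom4 : ∀ n : Fin L, Integrable (fun ω => ‖s n ω‖ ^ 4) ℙ) :
    cVar (fun ω => chiS L ψ T τ ν s ω + chiC L ψ T τ ν s ω)
      = cVar (chiS L ψ T τ ν s) + cVar (chiC L ψ T τ ν s) := by
  classical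
  have mconj : Measurable fun z : ℂ => (starRingEnd ℂ) z := Complex.continuous_conj.measurable
  have mabs : Measurable fun z : ℂ => ‖z‖ := continuous_norm.measurable
  have gInt : ∀ n, Integrable (fun ω => 1 + ‖s n ω‖ ^ 4) ℙ :=
    fun n => (integrable_const 1).add (hmom4 n)
  have intPow : ∀ (n : Fin L) (k : ℕ), k ≤ 4 →
      Integrable (fun ω => ‖s n ω‖ ^ k) ℙ := by
    intro n k hk
    refine (gInt n).mono' ((mabs.comp (hmeas n)).pow_const k).aestronglyMeasurable
      (Filter.Eventually.of_forall fun ω => ?_)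
    rw [Real.norm_eq_abs, _root_.abs_of_nonneg (pow_nonneg (norm_nonneg _) k)]
    exact pow_le_one_add_pow_four (norm_nonneg _) hk
  have intS : ∀ n, Integrable (s n) ℙ := by
    intro n
    refine (gInt n).mono' (hmeas n).aestronglyMeasurable
      (Filter.Eventually.of_forall fun ω => ?_)
    simpa using pow_le_one_add_pow_four (x := ‖s n ω‖)
      (norm_nonneg _) (k := 1) (by norm_num)
  have intConj : ∀ n, Integrable (fun ω => (starRingEnd ℂ) (s n ω)) ℙ := by
    intro n
    refine (intS n).norm.mono' (mconj.comp (hmeas n)).aestronglyMeasurable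
      (Filter.Eventually.of_forall fun ω => ?_)
    simp [RCLike.norm_conj]
  have intA : ∀ n, Integrable (fun ω => (Complex.ofReal (‖s n ω‖)) ^ 2) ℙ := by
    intro n
    refine (gInt n).mono'
      ((Complex.measurable_ofReal.comp (mabs.comp (hmeas n))).pow_const 2).aestronglyMeasurable
      (Filter.Eventually.of_forall fun ω => ?_)
    rw [norm_pow, Complex.norm_real, norm_norm]
    exact pow_le_one_add_pow_four (norm_nonneg _) (by norm_num)
  have intCube : ∀ n, Integrable (fun ω => (Complex.ofReal (‖s n ω‖)) ^ 2 * s n ω) ℙ := by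
    intro n
    refine (gInt n).mono'
      (((Complex.measurable_ofReal.comp (mabs.comp (hmeas n))).pow_const 2).mul
        (hmeas n)).aestronglyMeasurable
      (Filter.Eventually.of_forall fun ω => ?_)
    rw [norm_mul, norm_pow, Complex.norm_real, norm_norm, ← pow_succ]
    exact pow_le_one_add_pow_four (norm_nonneg _) (by norm_num)
  have intCube' : ∀ n, Integrable
      (fun ω => (Complex.ofReal (‖s n ω‖)) ^ 2 * (starRingEnd ℂ) (s n ω)) ℙ := by
    intro n
    refine (gInt n).mono'
      (((Complex.measurable_ofReal.comp (mabs.comp (hmeas n))).pow_const 2).mul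
        (mconj.comp (hmeas n))).aestronglyMeasurable
      (Filter.Eventually.of_forall fun ω => ?_)
    rw [norm_mul, norm_pow, Complex.norm_real, norm_norm, RCLike.norm_conj, ← pow_succ]
    exact pow_le_one_add_pow_four (norm_nonneg _) (by norm_num)
  have key : ∀ n p q : Fin L, q ≠ p →
      Integrable (fun ω => (Complex.ofReal (‖s n ω‖)) ^ 2 *
        (starRingEnd ℂ) (s p ω) * s q ω) ℙ ∧
      (∫ ω, (Complex.ofReal (‖s n ω‖)) ^ 2 *
        (starRingEnd ℂ) (s p ω) * s q ω) = 0 := by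
    intro n p q hqp
    by_cases hqn : q = n
    · subst hqn
      -- q = n, p ≠ q : group as (|s q|² s q) * conj (s p)
      have hFmeas : Measurable fun z : ℂ => (Complex.ofReal ‖z‖) ^ 2 * z :=
        ((Complex.measurable_ofReal.comp mabs).pow_const 2).mul measurable_id
      have hFG : IndepFun (fun ω => (Complex.ofReal (‖s q ω‖)) ^ 2 * s q ω)
          (fun ω => (starRingEnd ℂ) (s p ω)) ℙ :=
        (hindep.indepFun hqp).comp hFmeas mconj
      have hre : (fun ω => (Complex.ofReal (‖s q ω‖)) ^ 2 *
            (starRingEnd ℂ) (s p ω) * s q ω)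
          = fun ω => ((Complex.ofReal (‖s q ω‖)) ^ 2 * s q ω) *
            (starRingEnd ℂ) (s p ω) := funext fun ω => by ring
      constructor
      · rw [hre]; exact hFG.integrable_mul (intCube q) (intConj p)
      · rw [hre, indep_integral_mul_c hFG (intCube q) (intConj p), integral_conj, hmean p]
        simp
    · by_cases hpn : p = n
      · subst hpn
        -- p = n, q ≠ p : group as (|s p|² conj (s p)) * s q
        have hFG : IndepFun (fun ω => (Complex.ofReal (‖s p ω‖)) ^ 2 *
            (starRingEnd ℂ) (s p ω)) (s q) ℙ :=
          (hindep.indepFun (Ne.symm hqp)).comp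
            (((Complex.measurable_ofReal.comp mabs).pow_const 2).mul mconj) measurable_id
        constructor
        · exact hFG.integrable_mul (intCube' p) (intS q)
        · have h0 := indep_integral_mul_c hFG (intCube' p) (intS q)
          rw [hmean q, mul_zero] at h0
          exact h0
      · -- all distinct : group as (|s n|² conj (s p)) * s q
        have hpair : IndepFun (fun ω => (s n ω, s p ω)) (s q) ℙ :=
          hindep.indepFun_prodMk hmeas n p q (Ne.symm hqn) (fun h => hqp (h ▸ rfl))
        have hφ : Measurable fun z : ℂ × ℂ =>
            (Complex.ofReal ‖z.1‖) ^ 2 * (starRingEnd ℂ) z.2 :=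
          (((Complex.measurable_ofReal.comp mabs).comp measurable_fst).pow_const 2).mul
            (mconj.comp measurable_snd)
        have hFG : IndepFun (fun ω => (Complex.ofReal (‖s n ω‖)) ^ 2 *
            (starRingEnd ℂ) (s p ω)) (s q) ℙ := hpair.comp hφ measurable_id
        have intF : Integrable (fun ω => (Complex.ofReal (‖s n ω‖)) ^ 2 *
            (starRingEnd ℂ) (s p ω)) ℙ :=
          ((hindep.indepFun (fun h => hpn h.symm)).comp
            ((Complex.measurable_ofReal.comp mabs).pow_const 2) mconj).integrable_mul
            (intA n) (intConj p)
        constructor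
        · exact hFG.integrable_mul intF (intS q)
        · have h0 := indep_integral_mul_c hFG intF (intS q)
          rw [hmean q, mul_zero] at h0
          exact h0
  -- expectation of chi_c is zero
  have intT : ∀ n m : Fin L, m ≠ n →
      Integrable (fun ω => s n ω * (starRingEnd ℂ) (s m ω)) ℙ := fun n m h =>
    ((hindep.indepFun (Ne.symm h)).comp measurable_id mconj).integrable_mul (intS n) (intConj m)
  have zT : ∀ n m : Fin L, m ≠ n →
      (∫ ω, s n ω * (starRingEnd ℂ) (s m ω)) = 0 := by
    intro n m h
    have h0 : (∫ ω, s n ω * (starRingEnd ℂ) (s m ω))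
        = (∫ ω, s n ω) * ∫ ω, (starRingEnd ℂ) (s m ω) :=
      indep_integral_mul_c ((hindep.indepFun (Ne.symm h)).comp measurable_id mconj)
        (intS n) (intConj m)
    rw [hmean n, zero_mul] at h0
    exact h0
  have hEY : (∫ ω, chiC L ψ T τ ν s ω) = 0 := by
    have h1 : (∫ ω, chiC L ψ T τ ν s ω) = ∑ n : Fin L, ∑ m ∈ Finset.univ.erase n,
        ∫ ω, s n ω * (starRingEnd ℂ) (s m ω) * psiNM ψ T τ ν n m := by
      simp only [chiC]
      rw [integral_finset_sum _ (fun n _ => integrable_finset_sum _ fun m hm =>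
        (intT n m (Finset.ne_of_mem_erase hm)).mul_const _)]
      exact Finset.sum_congr rfl fun n _ => integral_finset_sum _ fun m hm =>
        (intT n m (Finset.ne_of_mem_erase hm)).mul_const _
    rw [h1]
    refine Finset.sum_eq_zero fun n _ => Finset.sum_eq_zero fun m hm => ?_
    rw [integral_mul_const, zT n m (Finset.ne_of_mem_erase hm), zero_mul]
  -- Memℒp 2 facts
  have memA : ∀ n, MemLp (fun ω => (Complex.ofReal (‖s n ω‖)) ^ 2) 2 ℙ := by
    intro n
    refine (memLp_two_iff_integrable_sq_norm
      ((Complex.measurable_ofReal.comp (mabs.comp (hmeas n))).pow_const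
        2).aestronglyMeasurable).2 ?_
    refine (hmom4 n).congr (Filter.Eventually.of_forall fun ω => ?_)
    simp [Function.comp, norm_pow, Complex.norm_real, norm_norm, ← pow_mul]
  have memT : ∀ n m : Fin L, m ≠ n →
      MemLp (fun ω => s n ω * (starRingEnd ℂ) (s m ω)) 2 ℙ := by
    intro n m h
    refine (memLp_two_iff_integrable_sq_norm
      ((hmeas n).mul (mconj.comp (hmeas m))).aestronglyMeasurable).2 ?_
    have hint : Integrable (fun ω => ‖s n ω‖ ^ 2 * ‖s m ω‖ ^ 2) ℙ :=
      ((hindep.indepFun (Ne.symm h)).comp (mabs.pow_const 2) (mabs.pow_const 2)).integrable_mul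
        (intPow n 2 (by norm_num)) (intPow m 2 (by norm_num))
    refine hint.congr (Filter.Eventually.of_forall fun ω => ?_)
    simp [Function.comp, norm_mul, RCLike.norm_conj, mul_pow]
  have memX : MemLp (chiS L ψ T τ ν s) 2 ℙ := by
    unfold chiS
    refine memLp_finsetSum _ fun n _ => ?_
    have h := (memA n).const_mul (psiNM ψ T τ ν n n)
    have he : (fun ω => psiNM ψ T τ ν n n * (Complex.ofReal (‖s n ω‖)) ^ 2)
        = fun ω => (Complex.ofReal (‖s n ω‖)) ^ 2 * psiNM ψ T τ ν n n :=
      funext fun ω => mul_comm _ _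
    rwa [he] at h
  have memY : MemLp (chiC L ψ T τ ν s) 2 ℙ := by
    unfold chiC
    refine memLp_finsetSum _ fun n _ => memLp_finsetSum _ fun m hm => ?_
    have h := (memT n m (Finset.ne_of_mem_erase hm)).const_mul (psiNM ψ T τ ν n m)
    have he : (fun ω => psiNM ψ T τ ν n m * (s n ω * (starRingEnd ℂ) (s m ω)))
        = fun ω => s n ω * (starRingEnd ℂ) (s m ω) * psiNM ψ T τ ν n m :=
      funext fun ω => by ring
    rwa [he] at h
  -- cross term vanishes
  have hpoint : ∀ ω : Ω, chiS L ψ T τ ν s ω * (starRingEnd ℂ) (chiC L ψ T τ ν s ω)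
      = ∑ n : Fin L, ∑ p : Fin L, ∑ q ∈ Finset.univ.erase p,
        ((Complex.ofReal (‖s n ω‖)) ^ 2 * (starRingEnd ℂ) (s p ω) * s q ω)
          * (psiNM ψ T τ ν n n * (starRingEnd ℂ) (psiNM ψ T τ ν p q)) := by
    intro ω
    unfold chiS chiC
    rw [map_sum, Finset.sum_mul_sum]
    refine Finset.sum_congr rfl fun n _ => Finset.sum_congr rfl fun p _ => ?_
    rw [map_sum, Finset.mul_sum]
    refine Finset.sum_congr rfl fun q _ => ?_
    simp only [map_mul, Complex.conj_conj]
    ring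
  have conjY2 : MemLp (fun ω => (starRingEnd ℂ) (chiC L ψ T τ ν s ω)) 2 ℙ := by
    refine MemLp.of_le memY (Complex.continuous_conj.comp_aestronglyMeasurable memY.1)
      (Filter.Eventually.of_forall fun ω => ?_)
    simp [RCLike.norm_conj]
  have e1 : (1 : ℝ≥0∞) / 1 = 1 / 2 + 1 / 2 := by
    rw [ENNReal.div_add_div_same, one_add_one_eq_two,
      ENNReal.div_self two_ne_zero ENNReal.ofNat_ne_top, one_div_one]
  have intXY : Integrable
      (fun ω => chiS L ψ T τ ν s ω * (starRingEnd ℂ) (chiC L ψ T τ ν s ω)) ℙ :=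
    memLp_one_iff_integrable.1 (memLp_mul' memX conjY2 e1)
  have hcross : (∫ ω, chiS L ψ T τ ν s ω * (starRingEnd ℂ) (chiC L ψ T τ ν s ω)) = 0 := by
    rw [show (fun ω => chiS L ψ T τ ν s ω * (starRingEnd ℂ) (chiC L ψ T τ ν s ω))
        = fun ω => ∑ n : Fin L, ∑ p : Fin L, ∑ q ∈ Finset.univ.erase p,
          ((Complex.ofReal (‖s n ω‖)) ^ 2 * (starRingEnd ℂ) (s p ω) * s q ω)
            * (psiNM ψ T τ ν n n * (starRingEnd ℂ) (psiNM ψ T τ ν p q)) from funext hpoint]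
    rw [integral_finset_sum _ fun n _ => integrable_finset_sum _ fun p _ =>
      integrable_finset_sum _ fun q hq => (key n p q (Finset.ne_of_mem_erase hq)).1.mul_const _]
    refine Finset.sum_eq_zero fun n _ => ?_
    rw [integral_finset_sum _ fun p _ => integrable_finset_sum _ fun q hq =>
      (key n p q (Finset.ne_of_mem_erase hq)).1.mul_const _]
    refine Finset.sum_eq_zero fun p _ => ?_
    rw [integral_finset_sum _ fun q hq =>
      (key n p q (Finset.ne_of_mem_erase hq)).1.mul_const _]
    refine Finset.sum_eq_zero fun q hq => ?_
    rw [integral_mul_const, (key n p q (Finset.ne_of_mem_erase hq)).2, zero_mul]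
  -- final assembly
  have intXx : Integrable (chiS L ψ T τ ν s) ℙ := memX.integrable one_le_two
  have intYy : Integrable (chiC L ψ T τ ν s) ℙ := memY.integrable one_le_two
  have intX2 : Integrable (fun ω => ‖chiS L ψ T τ ν s ω‖ ^ 2) ℙ := by
    refine ((memLp_two_iff_integrable_sq_norm memX.1).1 memX).congr
      (Filter.Eventually.of_forall fun ω => ?_)
    rfl
  have intY2 : Integrable (fun ω => ‖chiC L ψ T τ ν s ω‖ ^ 2) ℙ := by
    refine ((memLp_two_iff_integrable_sq_norm memY.1).1 memY).congr
      (Filter.Eventually.of_forall fun ω => ?_)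
    rfl
  have intRe : Integrable
      (fun ω => (chiS L ψ T τ ν s ω * (starRingEnd ℂ) (chiC L ψ T τ ν s ω)).re) ℙ := by
    simpa using intXY.re
  have hsq : (fun ω => ‖chiS L ψ T τ ν s ω + chiC L ψ T τ ν s ω‖ ^ 2)
      = fun ω => ‖chiS L ψ T τ ν s ω‖ ^ 2 + ‖chiC L ψ T τ ν s ω‖ ^ 2
        + 2 * (chiS L ψ T τ ν s ω * (starRingEnd ℂ) (chiC L ψ T τ ν s ω)).re := by
    funext ω
    rw [Complex.sq_norm, Complex.sq_norm, Complex.sq_norm, Complex.normSq_add]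
  have h3 : (∫ ω, (chiS L ψ T τ ν s ω * (starRingEnd ℂ) (chiC L ψ T τ ν s ω)).re) = 0 := by
    have h := integral_re intXY
    rw [hcross] at h
    simpa using h
  have hIsum : (∫ ω, ‖chiS L ψ T τ ν s ω + chiC L ψ T τ ν s ω‖ ^ 2)
      = (∫ ω, ‖chiS L ψ T τ ν s ω‖ ^ 2)
        + ∫ ω, ‖chiC L ψ T τ ν s ω‖ ^ 2 := by
    have ii : Integrable (fun ω => ‖chiS L ψ T τ ν s ω‖ ^ 2
        + ‖chiC L ψ T τ ν s ω‖ ^ 2) ℙ := intX2.add intY2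
    rw [hsq, integral_add ii (intRe.const_mul 2), integral_add intX2 intY2,
      integral_const_mul, h3, mul_zero, add_zero]
  have hEsum : (∫ ω, chiS L ψ T τ ν s ω + chiC L ψ T τ ν s ω) = ∫ ω, chiS L ψ T τ ν s ω := by
    rw [integral_add intXx intYy, hEY, add_zero]
  have goal : cVar (fun ω => chiS L ψ T τ ν s ω + chiC L ψ T τ ν s ω)
      = cVar (chiS L ψ T τ ν s) + cVar (chiC L ψ T τ ν s) := by
    simp only [cVar]
    rw [hIsum, hEsum, hEY]
    simp only [norm_zero]
    ring
  exact goal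
end

section
/- Let T > 0 and B > 0 satisfy 1/T ≤ B ≤ 2/T, let c > 0, and let ω ∈ L¹(ℝ, ℝ) be nonnegative almost everywhere, even (ω(f) = ω(−f) for a.e. f), and vanish almost everywhere outside [−B/2, B/2]. Then Σ_{m ∈ ℤ} ω(f + m/T) = c for almost every f ∈ ℝ if and only if: ω(f) = c for almost every f ∈ [0, 1/T − B/2], and ω(f) + ω(1/T − f) = c for almost every f ∈ [1/T − B/2, B/2]. -/
open MeasureTheory

private lemma fsc_ae_add_const {p : ℝ → Prop} (h : ∀ᵐ x : ℝ, p x) (c : ℝ) :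
    ∀ᵐ x : ℝ, p (x + c) :=
  (measurePreserving_add_right (volume : Measure ℝ) c).quasiMeasurePreserving.ae h

private lemma fsc_ae_const_sub {p : ℝ → Prop} (h : ∀ᵐ x : ℝ, p x) (c : ℝ) :
    ∀ᵐ x : ℝ, p (c - x) :=
  (Measure.measurePreserving_sub_left (volume : Measure ℝ) c).quasiMeasurePreserving.ae h

private lemma fsc_ae_of_ae_Ioo {a : ℝ} (ha : 0 < a) {Q : ℝ → Prop}
    (hper : ∀ f : ℝ, ∀ n : ℤ, Q (f + n * a) ↔ Q f)
    (h : ∀ᵐ f : ℝ, f ∈ Set.Ioo 0 a → Q f) : ∀ᵐ f : ℝ, Q f := by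
  have h2 : ∀ n : ℤ, ∀ᵐ f : ℝ,
      (f + (-n : ℤ) * a ∈ Set.Ioo 0 a → Q (f + (-n : ℤ) * a)) := fun n =>
    fsc_ae_add_const h (((-n : ℤ) : ℝ) * a)
  have h3 := ae_all_iff.2 h2
  have h4 : ∀ᵐ f : ℝ, f ∉ Set.range (fun n : ℤ => (n : ℝ) * a) :=
    measure_eq_zero_iff_ae_notMem.1 ((Set.countable_range _).measure_zero _)
  filter_upwards [h3, h4] with f hf hnr
  set n : ℤ := ⌊f / a⌋ with hn
  have h5 : (n : ℝ) ≤ f / a := Int.floor_le _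
  have h6 : f / a < n + 1 := Int.lt_floor_add_one _
  have hna : (n : ℝ) * a ≤ f := (le_div_iff₀ ha).1 h5
  have hna2 : f < ((n : ℝ) + 1) * a := (div_lt_iff₀ ha).1 h6
  have hne : f ≠ (n : ℝ) * a := fun hfe => hnr ⟨n, hfe.symm⟩
  have hmem : f + ((-n : ℤ) : ℝ) * a ∈ Set.Ioo 0 a := by
    push_cast
    constructor
    · rcases lt_of_le_of_ne hna (fun hh => hne hh.symm) with h'
      linarith
    · linarith
  have := (hf n) hmem
  exact (hper f (-n)).1 (by push_cast at this ⊢; exact this)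

/-- Recast of the constant folded-spectrum (Nyquist) criterion for a strictly band-limited,
even, nonnegative energy spectral density `ω` supported in `[−B/2, B/2]` with
`1/T ≤ B ≤ 2/T`: the folded spectrum `Σ_m ω(f + m/T)` is a.e. equal to the constant `c`
if and only if `ω(f) = c` for a.e. `f ∈ [0, 1/T − B/2]` and
`ω(f) + ω(1/T − f) = c` for a.e. `f ∈ [1/T − B/2, B/2]`. -/
theorem folded_spectrum_constant_iff_bandlimited_conditions
    (T B c : ℝ) (hT : 0 < T) (hB : 0 < B)
    (hB1 : 1 / T ≤ B) (hB2 : B ≤ 2 / T) (hc : 0 < c)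
    (ω : ℝ → ℝ) (hω1 : Integrable ω (volume : Measure ℝ))
    (hω0 : ∀ᵐ f : ℝ, 0 ≤ ω f)
    (heven : ∀ᵐ f : ℝ, ω f = ω (-f))
    (hsupp : ∀ᵐ f : ℝ, f ∉ Set.Icc (-(B / 2)) (B / 2) → ω f = 0) :
    (∀ᵐ f : ℝ, (∑' m : ℤ, ω (f + m / T)) = c)
      ↔ ((∀ᵐ f : ℝ, f ∈ Set.Icc 0 (1 / T - B / 2) → ω f = c)
          ∧ (∀ᵐ f : ℝ, f ∈ Set.Icc (1 / T - B / 2) (B / 2) → ω f + ω (1 / T - f) = c)) := by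
  have ha : 0 < 1 / T := by positivity
  have h2T : 2 / T = 2 * (1 / T) := by ring
  have hva : B / 2 ≤ 1 / T := by linarith
  have huv : 1 / T - B / 2 ≤ B / 2 := by linarith
  have hu0 : 0 ≤ 1 / T - B / 2 := by linarith
  -- exact periodicity of the folded sum
  have hperS : ∀ f : ℝ, ∀ n : ℤ,
      (∑' m : ℤ, ω (f + (n : ℝ) * (1 / T) + m / T)) = ∑' m : ℤ, ω (f + m / T) := by
    intro f n
    have he := (Equiv.addRight n).tsum_eq (fun m : ℤ => ω (f + m / T))
    rw [← he]
    apply tsum_congr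
    intro m
    have : f + (n : ℝ) * (1 / T) + (m : ℝ) / T = f + ((m + n : ℤ) : ℝ) / T := by
      push_cast; ring
    rw [this]
    rfl
  -- a.e. support condition at all translates
  have hA : ∀ᵐ f : ℝ, ∀ m : ℤ,
      (f + (m : ℝ) / T ∉ Set.Icc (-(B / 2)) (B / 2) → ω (f + (m : ℝ) / T) = 0) :=
    ae_all_iff.2 fun m => fsc_ae_add_const hsupp ((m : ℝ) / T)
  -- a.e. support condition at the reflected point
  have hB' : ∀ᵐ f : ℝ,
      (1 / T - f ∉ Set.Icc (-(B / 2)) (B / 2) → ω (1 / T - f) = 0) :=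
    fsc_ae_const_sub hsupp (1 / T)
  -- a.e. evenness : ω (f - 1/T) = ω (1/T - f)
  have hC : ∀ᵐ f : ℝ, ω (f - 1 / T) = ω (1 / T - f) := by
    have := fsc_ae_add_const heven (-(1 / T))
    filter_upwards [this] with f hf
    have h1 : f + -(1 / T) = f - 1 / T := by ring
    rw [h1, neg_sub] at hf
    exact hf
  -- key pointwise computation of the folded sum on (0, 1/T)
  have hkey : ∀ f : ℝ, f ∈ Set.Ioo 0 (1 / T) →
      (∀ m : ℤ, (f + (m : ℝ) / T ∉ Set.Icc (-(B / 2)) (B / 2) → ω (f + (m : ℝ) / T) = 0)) →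
      (∑' m : ℤ, ω (f + m / T)) = ω f + ω (f - 1 / T) := by
    intro f hf hAf
    have hzero : ∀ m : ℤ, m ∉ ({0, -1} : Finset ℤ) → ω (f + (m : ℝ) / T) = 0 := by
      intro m hm
      simp only [Finset.mem_insert, Finset.mem_singleton] at hm
      push_neg at hm
      obtain ⟨hm0, hm1⟩ := hm
      apply hAf m
      intro hmem
      obtain ⟨hL, hR⟩ := hmem
      have hda : (m : ℝ) / T = (m : ℝ) * (1 / T) := by ring
      rcases lt_or_gt_of_ne hm0 with hneg | hpos
      · have hm2 : m ≤ -2 := by omega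
        have h1 : (m : ℝ) ≤ -2 := by exact_mod_cast hm2
        have h2 : (m : ℝ) * (1 / T) ≤ (-2) * (1 / T) :=
          mul_le_mul_of_nonneg_right h1 ha.le
        rw [hda] at hL
        have : f < 1 / T := hf.2
        nlinarith
      · have hm2 : (1 : ℤ) ≤ m := hpos
        have h1 : (1 : ℝ) ≤ (m : ℝ) := by exact_mod_cast hm2
        have h2 : (1 : ℝ) * (1 / T) ≤ (m : ℝ) * (1 / T) :=
          mul_le_mul_of_nonneg_right h1 ha.le
        rw [hda] at hR
        have : 0 < f := hf.1
        nlinarith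
    rw [tsum_eq_sum hzero, Finset.sum_pair (by decide : (0 : ℤ) ≠ -1)]
    have e0 : f + ((0 : ℤ) : ℝ) / T = f := by push_cast; ring
    have e1 : f + ((-1 : ℤ) : ℝ) / T = f - 1 / T := by push_cast; ring
    rw [e0, e1]
  -- reduce the LHS to the interval (0, 1/T)
  have hstep1 : (∀ᵐ f : ℝ, (∑' m : ℤ, ω (f + m / T)) = c)
      ↔ (∀ᵐ f : ℝ, f ∈ Set.Ioo 0 (1 / T) → (∑' m : ℤ, ω (f + m / T)) = c) := by
    constructor
    · intro h
      filter_upwards [h] with f hf _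
      exact hf
    · intro h
      refine fsc_ae_of_ae_Ioo ha (fun f n => ?_) h
      rw [hperS f n]
  -- rewrite the sum on (0, 1/T)
  have hstep2 : (∀ᵐ f : ℝ, f ∈ Set.Ioo 0 (1 / T) → (∑' m : ℤ, ω (f + m / T)) = c)
      ↔ (∀ᵐ f : ℝ, f ∈ Set.Ioo 0 (1 / T) → ω f + ω (1 / T - f) = c) := by
    refine Filter.eventually_congr ?_
    filter_upwards [hA, hC] with f hAf hCf
    constructor
    · intro h hf
      rw [← hCf, ← hkey f hf hAf]
      exact h hf
    · intro h hf
      rw [hkey f hf hAf, hCf]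
      exact h hf
  rw [hstep1, hstep2]
  -- finitely many exceptional points
  have hfin : ∀ᵐ f : ℝ, f ∉ ({0, 1 / T - B / 2, B / 2} : Set ℝ) :=
    measure_eq_zero_iff_ae_notMem.1
      ((Set.toFinite ({0, 1 / T - B / 2, B / 2} : Set ℝ)).measure_zero _)
  constructor
  · -- forward direction
    intro h
    constructor
    · filter_upwards [h, hB', hfin] with f hf hB'f hfinf hfI
      have hne0 : f ≠ 0 := fun hh => hfinf (by simp [hh])
      have hneu : f ≠ 1 / T - B / 2 := fun hh => hfinf (by simp [hh])
      have h1 : 0 < f := lt_of_le_of_ne hfI.1 (Ne.symm hne0)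
      have h2 : f < 1 / T - B / 2 := lt_of_le_of_ne hfI.2 hneu
      have hmem : f ∈ Set.Ioo 0 (1 / T) := ⟨h1, by linarith⟩
      have hsum := hf hmem
      have hz : ω (1 / T - f) = 0 := by
        apply hB'f
        intro hmem'
        have := hmem'.2
        linarith
      linarith
    · filter_upwards [h, hfin] with f hf hfinf hfI
      have hneu : f ≠ 1 / T - B / 2 := fun hh => hfinf (by simp [hh])
      have hnev : f ≠ B / 2 := fun hh => hfinf (by simp [hh])
      have h1 : 1 / T - B / 2 < f := lt_of_le_of_ne hfI.1 (Ne.symm hneu)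
      have h2 : f < B / 2 := lt_of_le_of_ne hfI.2 hnev
      exact hf ⟨by linarith, by linarith⟩
  · -- backward direction
    rintro ⟨hi, hii⟩
    have hire : ∀ᵐ f : ℝ,
        (1 / T - f ∈ Set.Icc 0 (1 / T - B / 2) → ω (1 / T - f) = c) :=
      fsc_ae_const_sub hi (1 / T)
    filter_upwards [hi, hii, hire, hB', hsupp, hfin] with f hif hiif hiref hB'f hsuppf hfinf hfI
    obtain ⟨h0f, hfa⟩ := hfI
    have hneu : f ≠ 1 / T - B / 2 := fun hh => hfinf (by simp [hh])
    have hnev : f ≠ B / 2 := fun hh => hfinf (by simp [hh])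
    rcases lt_trichotomy f (1 / T - B / 2) with hlt | heq | hgt
    · have hz : ω (1 / T - f) = 0 := by
        apply hB'f
        intro hmem'
        have := hmem'.2
        linarith
      have := hif ⟨h0f.le, hlt.le⟩
      linarith
    · exact absurd heq hneu
    · rcases lt_trichotomy f (B / 2) with hlt2 | heq2 | hgt2
      · exact hiif ⟨hgt.le, hlt2.le⟩
      · exact absurd heq2 hnev
      · have hz : ω f = 0 := by
          apply hsuppf
          intro hmem'
          have := hmem'.2
          linarith
        have hval : ω (1 / T - f) = c := by
          apply hiref
          constructor
          · linarith
          · linarith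
        linarith
end

section
/- Under the stated assumptions, if additionally the pulse has unit energy and zero inter-symbol interference, i.e. ψ(0, 0) = 1 and ψ(nT, 0) = 0 for every integer n with 0 < |n| < L, then the mean squared energy of the frame signal satisfies E[|χ(0, 0)|²] = L·(μ₄ − 1) + L². -/
open MeasureTheory ProbabilityTheory Complex

/-- The ambiguity function of the frame signal at the origin:
`χ(0,0) = Σ_n Σ_m s_n conj(s_m) ψ((m−n)T, 0)`. -/
noncomputable def chiZero {Ω : Type*} (L : ℕ) (ψ : ℝ × ℝ → ℂ) (T : ℝ)
    (s : Fin L → Ω → ℂ) (ω : Ω) : ℂ :=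
  ∑ n : Fin L, ∑ m : Fin L, s n ω * (starRingEnd ℂ) (s m ω) * ψ (((m : ℝ) - (n : ℝ)) * T, 0)

/-- If the pulse has unit energy (`ψ(0,0) = 1`) and zero inter-symbol interference
(`ψ(nT,0) = 0` for `0 < |n| < L`), then the mean squared energy of the frame signal is
`E[|χ(0,0)|²] = L(μ₄ − 1) + L²`. -/
theorem mean_squared_energy
    {Ω : Type*} [MeasureSpace Ω] [IsProbabilityMeasure (ℙ : Measure Ω)]
    (L : ℕ) (hL : 1 ≤ L) (T : ℝ) (hT : 0 < T)
    (ψ : ℝ × ℝ → ℂ) (s : Fin L → Ω → ℂ) (μ₄ : ℝ) (hμ₄ : 1 ≤ μ₄)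
    (hmeas : ∀ n : Fin L, Measurable (s n))
    (hindep : iIndepFun s ℙ)
    (hmean : ∀ n : Fin L, ∫ ω, s n ω ∂ℙ = 0)
    (hpseudo : ∀ n : Fin L, ∫ ω, (s n ω) ^ 2 ∂ℙ = 0)
    (hE2 : ∀ n : Fin L, ∫ ω, ‖s n ω‖ ^ 2 ∂ℙ = 1)
    (hmom4 : ∀ n : Fin L, Integrable (fun ω => ‖s n ω‖ ^ 4) ℙ)
    (hE4 : ∀ n : Fin L, ∫ ω, ‖s n ω‖ ^ 4 ∂ℙ = μ₄)
    (hunit : ψ (0, 0) = 1)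
    (hISI : ∀ n : ℤ, 0 < |n| → |n| < (L : ℤ) → ψ ((n : ℝ) * T, 0) = 0) :
    (∫ ω, ‖chiZero L ψ T s ω‖ ^ 2 ∂ℙ) = L * (μ₄ - 1) + (L : ℝ) ^ 2 := by
  set g : Fin L → Ω → ℝ := fun n ω => ‖s n ω‖ ^ 2 with hg
  -- pointwise simplification of chi
  have hchi : ∀ ω, chiZero L ψ T s ω = ((∑ n : Fin L, g n ω : ℝ) : ℂ) := by
    intro ω
    rw [chiZero]
    push_cast
    refine Finset.sum_congr rfl fun n _ => ?_
    rw [Finset.sum_eq_single n]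
    · simp only [sub_self, zero_mul]
      rw [hunit, mul_one, Complex.mul_conj, hg, ← Complex.sq_norm]
    · intro m _ hmn
      have hne : (m : ℤ) ≠ (n : ℤ) := by
        have := Fin.val_ne_of_ne hmn; omega
      have hψ0 : ψ (((m : ℝ) - (n : ℝ)) * T, 0) = 0 := by
        have h1 : ((m : ℝ) - (n : ℝ)) = (((m : ℤ) - (n : ℤ) : ℤ) : ℝ) := by push_cast; ring
        rw [h1]
        apply hISI
        · exact abs_pos.mpr (sub_ne_zero.mpr hne)
        · rw [abs_sub_lt_iff]
          have hm := m.isLt; have hn := n.isLt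
          constructor <;> omega
      rw [hψ0, mul_zero]
    · intro h; exact absurd (Finset.mem_univ n) h
  -- abs squared
  have habs : ∀ ω, ‖chiZero L ψ T s ω‖ ^ 2
      = ∑ n : Fin L, ∑ m : Fin L, g n ω * g m ω := by
    intro ω
    rw [hchi ω, Complex.norm_real, Real.norm_eq_abs, _root_.sq_abs, pow_two, Finset.sum_mul_sum]
  -- measurability / integrability
  have hgmeas : ∀ n, Measurable (g n) := by
    intro n
    have h : g n = fun ω => ‖s n ω‖ ^ 2 := by
      funext ω; simp [hg]
    rw [h]; exact (hmeas n).norm.pow_const 2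
  have hgint : ∀ n, Integrable (g n) ℙ := by
    intro n
    refine Integrable.mono' ((integrable_const 1).add (hmom4 n)) (hgmeas n).aestronglyMeasurable ?_
    filter_upwards with ω
    have h1 : ‖g n ω‖ = ‖s n ω‖ ^ 2 := by
      rw [Real.norm_eq_abs]; exact _root_.abs_of_nonneg (by positivity)
    rw [h1]
    simp only [Pi.add_apply]
    nlinarith [sq_nonneg (‖s n ω‖ ^ 2 - 1)]
  have hpair : ∀ n m : Fin L, n ≠ m → IndepFun (g n) (g m) ℙ := by
    intro n m hnm
    exact (hindep.indepFun hnm).comp (measurable_norm.pow_const 2) (measurable_norm.pow_const 2)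
  have hintmul : ∀ n m : Fin L, Integrable (fun ω => g n ω * g m ω) ℙ := by
    intro n m
    rcases eq_or_ne n m with rfl | hnm
    · have h : (fun ω => g n ω * g n ω) = fun ω => ‖s n ω‖ ^ 4 := by
        funext ω; simp only [hg]; ring
      rw [h]; exact hmom4 n
    · exact (hpair n m hnm).integrable_mul (hgint n) (hgint m)
  -- compute
  calc (∫ ω, ‖chiZero L ψ T s ω‖ ^ 2 ∂ℙ)
      = ∫ ω, ∑ n : Fin L, ∑ m : Fin L, g n ω * g m ω ∂ℙ := by
        exact integral_congr_ae (Filter.Eventually.of_forall fun ω => habs ω)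
    _ = ∑ n : Fin L, ∑ m : Fin L, ∫ ω, g n ω * g m ω ∂ℙ := by
        rw [integral_finset_sum _ fun n _ => integrable_finset_sum _ fun m _ => hintmul n m]
        exact Finset.sum_congr rfl fun n _ => integral_finset_sum _ fun m _ => hintmul n m
    _ = ∑ n : Fin L, ∑ m : Fin L, (if n = m then μ₄ else 1) := by
        refine Finset.sum_congr rfl fun n _ => Finset.sum_congr rfl fun m _ => ?_
        rcases eq_or_ne n m with rfl | hnm
        · simp only [if_pos rfl]
          have h : (fun ω => g n ω * g n ω) = fun ω => ‖s n ω‖ ^ 4 := by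
            funext ω; simp only [hg]; ring
          rw [h]; exact hE4 n
        · rw [if_neg hnm]
          have := (hpair n m hnm).integral_mul_eq_mul_integral (hgmeas n).aestronglyMeasurable
            (hgmeas m).aestronglyMeasurable
          have h2 : ∫ ω, g n ω * g m ω ∂ℙ = (∫ ω, g n ω ∂ℙ) * ∫ ω, g m ω ∂ℙ := this
          rw [h2, hE2 n, hE2 m, one_mul]
    _ = L * (μ₄ - 1) + (L : ℝ) ^ 2 := by
        have hrow : ∀ n : Fin L, (∑ m : Fin L, (if n = m then μ₄ else 1))
            = (L : ℝ) + (μ₄ - 1) := by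
          intro n
          have h : ∀ m : Fin L, (if n = m then μ₄ else 1)
              = 1 + (if n = m then μ₄ - 1 else 0) := by
            intro m; split_ifs <;> ring
          rw [Finset.sum_congr rfl fun m _ => h m, Finset.sum_add_distrib,
            Finset.sum_ite_eq Finset.univ n (fun _ => μ₄ - 1)]
          simp [Finset.card_univ]
        rw [Finset.sum_congr rfl fun n _ => hrow n]
        simp [Finset.card_univ]
        ring
end
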